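/- arXiv:1808.09711 — 3 statements merged into one kernel-verified Lean document; each statement's English description precedes it below -/
import Mathlib

section
/- Let (M,d) be a separable metric space, μ a Borel regular Radon measure, E ⊆ M a Borel set, and t > 0. If the upper k-density Θ*_k(μ,x) = limsup_{r→0} μ(B(x,r))/(ω_k r^k) satisfies Θ*_k(μ,x) ≥ t for every x ∈ E, then μ ≥ t · 𝒮^k ⌞ E, where 𝒮^k denotes the k-dimensional spherical Hausdorff measure. -/
open MeasureTheory Metric Filter Topology
open scoped ENNReal Classical

/-- The normalizing constant ω_k = π^{k/2} / Γ(1 + k/2). -/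
noncomputable def hausdorffNormalization (k : ℝ) : ℝ :=
  Real.pi ^ (k / 2) / Real.Gamma (1 + k / 2)

/-- The k-dimensional spherical Hausdorff measure 𝒮^k on a metric space:
defined via the Carathéodory metric construction with the gauge that assigns
(ω_k/2^k)·(diam B)^k to closed balls B and +∞ to any other set (so that only
coverings by balls are effective). -/

noncomputable def sphericalHausdorff (M : Type*) [MetricSpace M] [MeasurableSpace M]
    [BorelSpace M] (k : ℝ) : Measure M :=
  Measure.mkMetric' (fun s =>
    if ∃ (x : M) (r : ℝ), s = closedBall x r then
      ENNReal.ofReal (hausdorffNormalization k / 2 ^ k) * EMetric.diam s ^ k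
    else ⊤)

/-- The upper k-density Θ*_k(μ,x) = limsup_{r→0⁺} μ(B(x,r))/(ω_k r^k). -/
noncomputable def upperDensity {M : Type*} [MetricSpace M] [MeasurableSpace M]
    (k : ℝ) (μ : Measure M) (x : M) : ℝ≥0∞ :=
  Filter.limsup
    (fun r : ℝ => μ (closedBall x r) / ENNReal.ofReal (hausdorffNormalization k * r ^ k))
    (𝓝[>] 0)

namespace SHAux

variable {M : Type*} [MetricSpace M] [MeasurableSpace M] [BorelSpace M]

/-- The gauge used in the definition of `sphericalHausdorff`. -/
noncomputable def sGauge (M : Type*) [MetricSpace M] (k : ℝ) : Set M → ℝ≥0∞ := fun s =>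
  if ∃ (x : M) (r : ℝ), s = closedBall x r then
    ENNReal.ofReal (hausdorffNormalization k / 2 ^ k) * EMetric.diam s ^ k
  else ⊤

lemma sphericalHausdorff_eq (k : ℝ) :
    sphericalHausdorff M k = Measure.mkMetric' (sGauge M k) := rfl

lemma sphericalHausdorff_apply (k : ℝ) {A : Set M} (hA : MeasurableSet A) :
    sphericalHausdorff M k A = OuterMeasure.mkMetric' (sGauge M k) A :=
  toMeasure_apply _ (OuterMeasure.mkMetric'_isMetric _).le_caratheodory hA

lemma ediam_closedBall_le (c : M) (r : ℝ) :
    EMetric.diam (closedBall c r) ≤ ENNReal.ofReal (2 * r) := by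
  refine EMetric.diam_le fun x hx y hy => ?_
  rw [edist_dist]
  refine ENNReal.ofReal_le_ofReal ?_
  have hx' : dist x c ≤ r := mem_closedBall.1 hx
  have hy' : dist y c ≤ r := mem_closedBall.1 hy
  calc dist x y ≤ dist x c + dist y c := dist_triangle_right x y c
    _ ≤ 2 * r := by linarith

lemma sGauge_closedBall_le {k : ℝ} (hk : 0 ≤ k) (hnorm : 0 < hausdorffNormalization k)
    (c : M) {r : ℝ} (hr : 0 < r) :
    sGauge M k (closedBall c r) ≤ ENNReal.ofReal (hausdorffNormalization k * r ^ k) := by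
  have h2r : (0:ℝ) < 2 * r := by linarith
  have h2k : (0:ℝ) < 2 ^ k := Real.rpow_pos_of_pos two_pos k
  have heq : sGauge M k (closedBall c r)
      = ENNReal.ofReal (hausdorffNormalization k / 2 ^ k) * EMetric.diam (closedBall c r) ^ k := by
    rw [sGauge, if_pos ⟨c, r, rfl⟩]
  rw [heq]
  calc ENNReal.ofReal (hausdorffNormalization k / 2 ^ k) * EMetric.diam (closedBall c r) ^ k
      ≤ ENNReal.ofReal (hausdorffNormalization k / 2 ^ k) * ENNReal.ofReal (2 * r) ^ k :=
        mul_le_mul_right (ENNReal.rpow_le_rpow (ediam_closedBall_le c r) hk) _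
    _ = ENNReal.ofReal (hausdorffNormalization k / 2 ^ k * (2 * r) ^ k) := by
        rw [ENNReal.ofReal_rpow_of_pos h2r, ← ENNReal.ofReal_mul (by positivity)]
    _ = ENNReal.ofReal (hausdorffNormalization k * r ^ k) := by
        congr 1
        rw [Real.mul_rpow (by norm_num) hr.le]
        field_simp

/-- If the gauge normalization is nonpositive, the spherical Hausdorff measure vanishes. -/
lemma caseB [TopologicalSpace.SeparableSpace M] {k : ℝ} (h : hausdorffNormalization k ≤ 0)
    (A : Set M) (hA : MeasurableSet A) : sphericalHausdorff M k A = 0 := by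
  have hgauge : ∀ (c : M) (ρ : ℝ), sGauge M k (closedBall c ρ) = 0 := by
    intro c ρ
    rw [sGauge, if_pos ⟨c, ρ, rfl⟩]
    have : hausdorffNormalization k / 2 ^ k ≤ 0 :=
      div_nonpos_iff.2 (Or.inr ⟨h, (Real.rpow_pos_of_pos two_pos k).le⟩)
    rw [ENNReal.ofReal_eq_zero.2 this, zero_mul]
  rw [sphericalHausdorff_apply k hA]
  refine le_antisymm ?_ zero_le
  rw [OuterMeasure.mkMetric']
  simp only [OuterMeasure.iSup_apply]
  refine iSup_le fun δ' => iSup_le fun hδ' => ?_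
  obtain ⟨D, Dcnt, Ddense⟩ := TopologicalSpace.exists_countable_dense M
  haveI := Dcnt.to_subtype
  set ρ : ℝ := (min 1 δ').toReal / 4 with hρdef
  have hmintop : min 1 δ' ≠ ⊤ := by
    exact ((min_le_left _ _).trans_lt (by norm_num)).ne
  have hminpos : (0:ℝ≥0∞) < min 1 δ' := lt_min one_pos hδ'
  have hρpos : 0 < ρ := by
    rw [hρdef]
    have := ENNReal.toReal_pos hminpos.ne' hmintop
    linarith
  have hcover : A ⊆ ⋃ y : D, closedBall (y : M) ρ := by
    intro x _
    obtain ⟨y, hyD, hy⟩ := Metric.mem_closure_iff.1 (Ddense x) ρ hρpos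
    exact Set.mem_iUnion.2 ⟨⟨y, hyD⟩, mem_closedBall.2 hy.le⟩
  have hdiam : ∀ y : D, EMetric.diam (closedBall (y : M) ρ) ≤ δ' := by
    intro y
    refine (ediam_closedBall_le _ _).trans ?_
    have h1 : ENNReal.ofReal (2 * ρ) ≤ ENNReal.ofReal ((min 1 δ').toReal) := by
      refine ENNReal.ofReal_le_ofReal ?_
      rw [hρdef]; linarith [ENNReal.toReal_nonneg (a := min 1 δ')]
    rw [ENNReal.ofReal_toReal hmintop] at h1
    exact h1.trans (min_le_right _ _)
  calc OuterMeasure.mkMetric'.pre (sGauge M k) δ' A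
      ≤ OuterMeasure.mkMetric'.pre (sGauge M k) δ' (⋃ y : D, closedBall (y : M) ρ) :=
        measure_mono hcover
    _ ≤ ∑' y : D, OuterMeasure.mkMetric'.pre (sGauge M k) δ' (closedBall (y : M) ρ) :=
        measure_iUnion_le _
    _ ≤ ∑' y : D, sGauge M k (closedBall (y : M) ρ) :=
        ENNReal.tsum_le_tsum fun y => OuterMeasure.mkMetric'.pre_le (hdiam y)
    _ = 0 := by simp [hgauge]

/-- A Radon regular measure is finite on some closed ball around every point. -/
lemma exists_closedBall_finite (μ : Measure M) [μ.Regular] (x : M) :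
    ∃ r : ℝ, 0 < r ∧ μ (closedBall x r) < ⊤ := by
  have hx : μ {x} < ⊤ := isCompact_singleton.measure_lt_top
  obtain ⟨U, hxU, hUo, hμU⟩ := Set.exists_isOpen_lt_of_lt {x} (μ {x} + 1)
    (ENNReal.lt_add_right hx.ne one_ne_zero)
  obtain ⟨ρ, ρpos, hρ⟩ := Metric.isOpen_iff.1 hUo x (hxU rfl)
  refine ⟨ρ/2, by linarith, lt_of_le_of_lt (measure_mono ?_) (hμU.trans_le le_top)⟩
  exact (closedBall_subset_ball (by linarith)).trans hρ
  -- μ U < μ {x} + 1 < ⊤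

/-- In the case k < 0 with positive normalization, the density hypothesis is contradictory. -/
lemma caseC (μ : Measure M) [μ.Regular] {k t : ℝ} (hk : k < 0)
    (hnorm : 0 < hausdorffNormalization k) (ht : 0 < t) {x : M}
    (hd : ENNReal.ofReal t ≤ upperDensity k μ x) : False := by
  obtain ⟨r₀, hr₀, hfin⟩ := exists_closedBall_finite μ x
  set b : ℝ := (μ (closedBall x r₀)).toReal with hbdef
  have hb : μ (closedBall x r₀) = ENNReal.ofReal b := (ENNReal.ofReal_toReal hfin.ne).symm
  set ω : ℝ := hausdorffNormalization k with hω
  -- r ^ k → ∞ as r → 0+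
  have h1 : Tendsto (fun r : ℝ => r ^ k) (𝓝[>] (0:ℝ)) atTop := by
    have h2 : Tendsto (fun r : ℝ => (r⁻¹) ^ (-k)) (𝓝[>] (0:ℝ)) atTop :=
      (tendsto_rpow_atTop (by linarith)).comp tendsto_inv_nhdsGT_zero
    refine h2.congr' ?_
    filter_upwards [self_mem_nhdsWithin] with r hr
    have hr0 : (0:ℝ) < r := hr
    rw [Real.inv_rpow hr0.le, Real.rpow_neg hr0.le, inv_inv]
  have htend : Tendsto (fun r : ℝ => t / 2 * ω * r ^ k) (𝓝[>] (0:ℝ)) atTop := by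
    exact h1.const_mul_atTop (by positivity)
  have hev : ∀ᶠ r in 𝓝[>] (0:ℝ),
      μ (closedBall x r) / ENNReal.ofReal (hausdorffNormalization k * r ^ k)
        ≤ ENNReal.ofReal (t/2) := by
    filter_upwards [Ioc_mem_nhdsGT hr₀, htend.eventually_ge_atTop b,
      self_mem_nhdsWithin] with r hr hbr hr0
    have hr0' : (0:ℝ) < r := hr0
    have hrk : (0:ℝ) < ω * r ^ k := mul_pos hnorm (Real.rpow_pos_of_pos hr0' k)
    have hd0 : ENNReal.ofReal (hausdorffNormalization k * r ^ k) ≠ 0 := by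
      simp only [ne_eq, ENNReal.ofReal_eq_zero, not_le]; exact hrk
    rw [ENNReal.div_le_iff hd0 ENNReal.ofReal_ne_top]
    calc μ (closedBall x r) ≤ ENNReal.ofReal b := by
          rw [← hb]; exact measure_mono (closedBall_subset_closedBall hr.2)
      _ ≤ ENNReal.ofReal (t/2 * (hausdorffNormalization k * r ^ k)) := by
          refine ENNReal.ofReal_le_ofReal ?_
          calc b ≤ t / 2 * ω * r ^ k := hbr
            _ = t/2 * (hausdorffNormalization k * r ^ k) := by rw [hω]; ring
      _ = ENNReal.ofReal (t/2) * ENNReal.ofReal (hausdorffNormalization k * r ^ k) :=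
          ENNReal.ofReal_mul (by linarith)
  have hle : upperDensity k μ x ≤ ENNReal.ofReal (t/2) :=
    limsup_le_of_le ⟨0, fun a _ => zero_le⟩ hev
  have : ENNReal.ofReal t ≤ ENNReal.ofReal (t/2) := hd.trans hle
  have hlt : ENNReal.ofReal (t/2) < ENNReal.ofReal t :=
    (ENNReal.ofReal_lt_ofReal_iff ht).2 (by linarith)
  exact absurd this (not_le.2 hlt)

/-- Main covering estimate, for open sets, in the case `0 ≤ k`. -/
lemma key [TopologicalSpace.SeparableSpace M] (μ : Measure M) [μ.Regular] {k t : ℝ}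
    (hk : 0 ≤ k) (hnorm : 0 < hausdorffNormalization k) (ht : 0 < t) {E : Set M}
    (hE : MeasurableSet E)
    (hdens : ∀ x ∈ E, ENNReal.ofReal t ≤ upperDensity k μ x)
    {U : Set M} (hU : IsOpen U) :
    ENNReal.ofReal t * sphericalHausdorff M k (U ∩ E) ≤ μ U := by
  rcases eq_top_or_lt_top (μ U) with hμU | hμU
  · rw [hμU]; exact le_top
  set A := U ∩ E with hAdef
  rw [sphericalHausdorff_apply k (hU.measurableSet.inter hE)]
  apply ENNReal.le_of_forall_lt_one_mul_le
  intro a ha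
  rw [← mul_assoc]
  set t'' := a * ENNReal.ofReal t with ht''def
  have hc0 : (ENNReal.ofReal t) ≠ 0 := by
    simp only [ne_eq, ENNReal.ofReal_eq_zero, not_le]; exact ht
  have ht''lt : t'' < ENNReal.ofReal t := by
    have h1 := ENNReal.mul_lt_mul_left hc0 ENNReal.ofReal_ne_top ha
    rwa [one_mul] at h1
  have ht''top : t'' ≠ ⊤ :=
    (ht''lt.trans_le le_top).ne
  rw [OuterMeasure.mkMetric']
  simp only [OuterMeasure.iSup_apply]
  rw [ENNReal.mul_iSup]
  refine iSup_le fun δ' => ?_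
  rw [ENNReal.mul_iSup]
  refine iSup_le fun hδ' => ?_
  -- choose a real radius bound δ with ofReal (10 δ) ≤ δ'
  have hmintop : min 1 δ' ≠ ⊤ := ((min_le_left _ _).trans_lt (by norm_num)).ne
  have hminpos : (0:ℝ≥0∞) < min 1 δ' := lt_min one_pos hδ'
  set δ : ℝ := (min 1 δ').toReal / 20 with hδdef
  have hδpos : 0 < δ := by
    rw [hδdef]
    have := ENNReal.toReal_pos hminpos.ne' hmintop
    linarith
  have hδle : ENNReal.ofReal (10 * δ) ≤ δ' := by
    have h1 : ENNReal.ofReal (10 * δ) ≤ ENNReal.ofReal ((min 1 δ').toReal) := by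
      refine ENNReal.ofReal_le_ofReal ?_
      rw [hδdef]; linarith [ENNReal.toReal_nonneg (a := min 1 δ')]
    rw [ENNReal.ofReal_toReal hmintop] at h1
    exact h1.trans (min_le_right _ _)
  apply ENNReal.le_of_forall_pos_le_add
  intro ε' hε' _
  have h5kpos : (0:ℝ) < (5:ℝ) ^ k := Real.rpow_pos_of_pos (by norm_num) k
  have h5k0 : ENNReal.ofReal ((5:ℝ) ^ k) ≠ 0 := by
    simp only [ne_eq, ENNReal.ofReal_eq_zero, not_le]; exact h5kpos
  set η : ℝ≥0∞ := (ε' : ℝ≥0∞) / ENNReal.ofReal ((5:ℝ) ^ k) with hηdef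
  have hη : 0 < η :=
    ENNReal.div_pos (by exact_mod_cast hε'.ne') ENNReal.ofReal_ne_top
  -- the fine family of balls
  set T : Set (M × ℝ) := {p | p.1 ∈ A ∧ 0 < p.2 ∧ p.2 ≤ δ ∧ closedBall p.1 p.2 ⊆ U ∧
    t'' * ENNReal.ofReal (hausdorffNormalization k * p.2 ^ k) ≤ μ (closedBall p.1 p.2)}
    with hTdef
  have hT : ∀ x ∈ A, ∀ η₀ > (0:ℝ), ∃ r, 0 < r ∧ r ≤ η₀ ∧ (x, r) ∈ T := by
    rintro x ⟨hxU, hxE⟩ η₀ hη₀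
    obtain ⟨ρ, ρpos, hρ⟩ := Metric.isOpen_iff.1 hU x hxU
    have hfreq : ∃ᶠ r in 𝓝[>] (0:ℝ),
        t'' < μ (closedBall x r) / ENNReal.ofReal (hausdorffNormalization k * r ^ k) := by
      apply frequently_lt_of_lt_limsup ⟨0, fun c _ => zero_le⟩
      exact lt_of_lt_of_le ht''lt (hdens x hxE)
    have hev : ∀ᶠ r in 𝓝[>] (0:ℝ), r ∈ Set.Ioc (0:ℝ) (min (min η₀ δ) (ρ/2)) :=
      Ioc_mem_nhdsGT (by positivity)
    obtain ⟨r, hr1, hr2⟩ := (hfreq.and_eventually hev).exists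
    obtain ⟨hr0, hrle⟩ := hr2
    have hball : closedBall x r ⊆ U := by
      intro y hy
      apply hρ
      have h1 : dist y x ≤ r := hy
      have h2 : r ≤ ρ/2 := hrle.trans (min_le_right _ _)
      exact mem_ball.2 (by linarith)
    have hd0 : ENNReal.ofReal (hausdorffNormalization k * r ^ k) ≠ 0 := by
      simp only [ne_eq, ENNReal.ofReal_eq_zero, not_le]
      exact mul_pos hnorm (Real.rpow_pos_of_pos hr0 k)
    have hμr : t'' * ENNReal.ofReal (hausdorffNormalization k * r ^ k)
        ≤ μ (closedBall x r) :=
      (ENNReal.le_div_iff_mul_le (Or.inl hd0) (Or.inl ENNReal.ofReal_ne_top)).1 hr1.le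
    exact ⟨r, hr0, hrle.trans ((min_le_left _ _).trans (min_le_left _ _)),
      ⟨hxU, hxE⟩, hr0, hrle.trans ((min_le_left _ _).trans (min_le_right _ _)), hball, hμr⟩
  -- Vitali covering lemma
  obtain ⟨u, huT, hdisj, hcov⟩ := Vitali.exists_disjoint_subfamily_covering_enlargement
    (fun p : M × ℝ => closedBall p.1 p.2) T (fun p => p.2) 2 one_lt_two
    (fun p hp => hp.2.1.le) δ (fun p hp => hp.2.2.1)
    (fun p hp => (Metric.nonempty_closedBall).2 hp.2.1.le)
  have hcnt : u.Countable := by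
    refine Set.PairwiseDisjoint.countable_of_isOpen
      (s := fun p : M × ℝ => ball p.1 p.2)
      (hdisj.mono_on fun p _ => ball_subset_closedBall)
      (fun p _ => isOpen_ball) (fun p hp => nonempty_ball.2 (huT hp).2.1)
  haveI := hcnt.to_subtype
  set f : u → ℝ≥0∞ := fun b => μ (closedBall (b:M × ℝ).1 (b:M × ℝ).2) with hfdef
  have hsum : ∑' b, f b ≤ μ U := by
    have hdisj' : Pairwise (Function.onFun Disjoint fun b : u => closedBall (b:M × ℝ).1 (b:M × ℝ).2) :=
      hdisj.subtype _ _
    rw [hfdef, ← measure_iUnion hdisj' fun b => measurableSet_closedBall]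
    exact measure_mono (Set.iUnion_subset fun b => (huT b.2).2.2.2.1)
  have hfin : ∑' b, f b ≠ ⊤ := (hsum.trans_lt hμU).ne
  obtain ⟨F, hF⟩ : ∃ F : Finset u, ∑' b : {x : u // x ∉ F}, f b < η :=
    ((ENNReal.tendsto_tsum_compl_atTop_zero hfin).eventually (gt_mem_nhds hη)).exists
  -- the covering sets
  set C : u → Set M := fun b =>
    if b ∈ F then closedBall (b:M × ℝ).1 (b:M × ℝ).2
    else closedBall (b:M × ℝ).1 (5 * (b:M × ℝ).2) with hCdef
  have hAC : A ⊆ ⋃ b, C b := by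
    intro x hx
    by_cases hxF : ∃ b : u, b ∈ F ∧ x ∈ closedBall (b:M × ℝ).1 (b:M × ℝ).2
    · obtain ⟨b, hbF, hxb⟩ := hxF
      exact Set.mem_iUnion.2 ⟨b, by rw [hCdef]; simp only [if_pos hbF]; exact hxb⟩
    · push_neg at hxF
      obtain ⟨η₀, hη₀pos, hη₀le⟩ :
          ∃ η₀, 0 < η₀ ∧ ∀ b ∈ F, η₀ ≤ dist x (b:M × ℝ).1 - (b:M × ℝ).2 := by
        rcases F.eq_empty_or_nonempty with hFe | hFne
        · exact ⟨1, one_pos, by simp [hFe]⟩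
        · refine ⟨F.inf' hFne (fun b => dist x (b:M × ℝ).1 - (b:M × ℝ).2), ?_,
            fun b hb => Finset.inf'_le _ hb⟩
          rw [Finset.lt_inf'_iff]
          intro b hb
          have hxb := hxF b hb
          rw [mem_closedBall, not_le] at hxb
          linarith
      obtain ⟨r, hr0, hrle, hrT⟩ := hT x hx (η₀/2) (by linarith)
      obtain ⟨q, hqu, ⟨z, hz1, hz2⟩, hq2⟩ := hcov (x, r) hrT
      have hq0 : 0 < q.2 := (huT hqu).2.1
      have hdxq : dist x q.1 ≤ r + q.2 := by
        have ha1 : dist z x ≤ r := mem_closedBall.1 hz1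
        have ha2 : dist z q.1 ≤ q.2 := mem_closedBall.1 hz2
        calc dist x q.1 ≤ dist x z + dist z q.1 := dist_triangle x z q.1
          _ ≤ r + q.2 := by rw [dist_comm x z]; exact add_le_add ha1 ha2
      have hqF : (⟨q, hqu⟩ : u) ∉ F := by
        intro hqF
        have h2 := hη₀le ⟨q, hqu⟩ hqF
        simp only at h2
        linarith
      refine Set.mem_iUnion.2 ⟨⟨q, hqu⟩, ?_⟩
      rw [hCdef]
      simp only [if_neg hqF]
      have : dist x q.1 ≤ 5 * q.2 := by
        have : r ≤ 2 * q.2 := by exact_mod_cast hq2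
        linarith
      exact mem_closedBall.2 this
  -- diameters are small enough
  have hdiam : ∀ b : u, EMetric.diam (C b) ≤ δ' := by
    intro b
    have hbδ : (b:M × ℝ).2 ≤ δ := (huT b.2).2.2.1
    have hb0 : 0 < (b:M × ℝ).2 := (huT b.2).2.1
    rw [hCdef]
    by_cases hbF : b ∈ F
    · simp only [if_pos hbF]
      refine (ediam_closedBall_le _ _).trans (le_trans ?_ hδle)
      exact ENNReal.ofReal_le_ofReal (by linarith)
    · simp only [if_neg hbF]
      refine (ediam_closedBall_le _ _).trans (le_trans ?_ hδle)
      exact ENNReal.ofReal_le_ofReal (by linarith)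
  -- gauge bound for each covering set
  have hgauge : ∀ b : u, t'' * sGauge M k (C b)
      ≤ f b + ENNReal.ofReal ((5:ℝ) ^ k) * Set.indicator ((F : Set u))ᶜ f b := by
    intro b
    have hb0 : 0 < (b:M × ℝ).2 := (huT b.2).2.1
    have hμb := (huT b.2).2.2.2.2
    by_cases hbF : b ∈ F
    · have hind : Set.indicator ((F : Set u))ᶜ f b = 0 := by
        rw [Set.indicator_of_notMem]
        simp [hbF]
      rw [hind, mul_zero, add_zero, hCdef]
      simp only [if_pos hbF]
      refine le_trans (mul_le_mul_right (sGauge_closedBall_le hk hnorm _ hb0) _) ?_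
      exact hμb
    · have hind : Set.indicator ((F : Set u))ᶜ f b = f b := by
        rw [Set.indicator_of_mem]
        simp [hbF]
      rw [hind, hCdef]
      simp only [if_neg hbF]
      have h50 : 0 < 5 * (b:M × ℝ).2 := by linarith
      refine le_trans (mul_le_mul_right (sGauge_closedBall_le hk hnorm _ h50) _) ?_
      have heq : hausdorffNormalization k * (5 * (b:M × ℝ).2) ^ k
          = (5:ℝ) ^ k * (hausdorffNormalization k * (b:M × ℝ).2 ^ k) := by
        rw [Real.mul_rpow (by norm_num) hb0.le]; ring
      rw [heq, ENNReal.ofReal_mul h5kpos.le, ← mul_assoc, mul_comm t'', mul_assoc]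
      refine le_trans (mul_le_mul_right hμb _) ?_
      exact le_add_self
  -- tail estimate
  have htail : ∑' b : u, Set.indicator ((F : Set u))ᶜ f b ≤ η := by
    rw [← tsum_subtype ((F : Set u))ᶜ f]
    exact le_of_lt hF
  -- put everything together
  calc t'' * OuterMeasure.mkMetric'.pre (sGauge M k) δ' A
      ≤ t'' * ∑' b, sGauge M k (C b) := by
        refine mul_le_mul_right ?_ _
        calc OuterMeasure.mkMetric'.pre (sGauge M k) δ' A
            ≤ OuterMeasure.mkMetric'.pre (sGauge M k) δ' (⋃ b, C b) :=
              measure_mono hAC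
          _ ≤ ∑' b, OuterMeasure.mkMetric'.pre (sGauge M k) δ' (C b) := measure_iUnion_le _
          _ ≤ ∑' b, sGauge M k (C b) :=
              ENNReal.tsum_le_tsum fun b => OuterMeasure.mkMetric'.pre_le (hdiam b)
    _ = ∑' b, t'' * sGauge M k (C b) := ENNReal.tsum_mul_left.symm
    _ ≤ ∑' b, (f b + ENNReal.ofReal ((5:ℝ) ^ k) * Set.indicator ((F : Set u))ᶜ f b) :=
        ENNReal.tsum_le_tsum hgauge
    _ = (∑' b, f b) + ENNReal.ofReal ((5:ℝ) ^ k) * ∑' b, Set.indicator ((F : Set u))ᶜ f b := by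
        rw [ENNReal.tsum_add, ENNReal.tsum_mul_left]
    _ ≤ μ U + ENNReal.ofReal ((5:ℝ) ^ k) * η := by
        exact add_le_add hsum (mul_le_mul_right htail _)
    _ ≤ μ U + ε' := by
        refine add_le_add_right ?_ _
        rw [hηdef]
        exact ENNReal.mul_div_le

end SHAux

/-- **Upper density lower bound implies measure lower bound.**
If μ is a Borel regular Radon measure on a separable metric space, E is Borel, t > 0,
and Θ*_k(μ,x) ≥ t for every x ∈ E, then μ ≥ t · 𝒮^k ⌞ E. -/
theorem stmt_2 {M : Type*} [MetricSpace M] [TopologicalSpace.SeparableSpace M]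
    [MeasurableSpace M] [BorelSpace M]
    (μ : Measure M) [μ.Regular]
    (k t : ℝ) (ht : 0 < t) (E : Set M) (hE : MeasurableSet E)
    (hdens : ∀ x ∈ E, ENNReal.ofReal t ≤ upperDensity k μ x) :
    ENNReal.ofReal t • (sphericalHausdorff M k).restrict E ≤ μ := by
  rw [Measure.le_iff]
  intro s hs
  rw [Measure.smul_apply, smul_eq_mul, Measure.restrict_apply hs]
  by_cases hnorm : 0 < hausdorffNormalization k
  · by_cases hk : 0 ≤ k
    · -- main case
      rw [Set.measure_eq_iInf_isOpen s μ]
      simp only [le_iInf_iff]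
      intro U hsU hUo
      refine le_trans ?_ (SHAux.key μ hk hnorm ht hE hdens hUo)
      exact mul_le_mul_right (measure_mono (Set.inter_subset_inter_left E hsU)) _
    · push_neg at hk
      have hE0 : E = ∅ := Set.eq_empty_iff_forall_notMem.2 fun x hx =>
        SHAux.caseC μ hk hnorm ht (hdens x hx)
      rw [hE0, Set.inter_empty, measure_empty, mul_zero]
      exact zero_le
  · push_neg at hnorm
    rw [SHAux.caseB hnorm (s ∩ E) (hs.inter hE), mul_zero]
    exact zero_le
end

section
/- Let (M,d) be a separable metric space, μ a Borel regular Radon measure, E ⊆ M a Borel set, and t > 0. If Θ*_k(μ,x) ≤ t for every x ∈ E, then μ ⌞ E ≤ 2^k · t · ℋ^k ⌞ E, where ℋ^k is the k-dimensional Hausdorff measure. In particular, Θ*_k(μ,x) < +∞ for ℋ^k-almost every x ∈ M. -/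
open MeasureTheory Metric Filter Topology
open scoped ENNReal MeasureTheory

/-- The k-dimensional Hausdorff measure ℋ^k with the classical normalization
ω_k/2^k (Mathlib's `μH[k]` is unnormalized). -/
noncomputable def normHausdorff (M : Type*) [MetricSpace M] [MeasurableSpace M]
    [BorelSpace M] (k : ℝ) : Measure M :=
  ENNReal.ofReal (hausdorffNormalization k / 2 ^ k) • μH[k]

open Set

set_option linter.unusedSectionVars false
set_option linter.unusedVariables false
set_option maxHeartbeats 1000000

lemma omega_pos_of_nonneg {k : ℝ} (hk : 0 ≤ k) : 0 < hausdorffNormalization k := by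
  unfold hausdorffNormalization
  have h1 : (0:ℝ) < Real.pi ^ (k / 2) := Real.rpow_pos_of_pos Real.pi_pos _
  have h2 : (0:ℝ) < Real.Gamma (1 + k / 2) := Real.Gamma_pos_of_pos (by linarith)
  positivity

section helpers
variable {M : Type*} [MetricSpace M] [MeasurableSpace M] [BorelSpace M]

lemma locfin (μ : Measure M) [μ.Regular] (x : M) : ∃ ρ > 0, μ (closedBall x ρ) < ⊤ := by
  have hx : μ {x} < μ {x} + 1 :=
    ENNReal.lt_add_right (isCompact_singleton.measure_lt_top).ne one_ne_zero
  obtain ⟨U, hxU, hUopen, hU⟩ := Set.exists_isOpen_lt_of_lt {x} _ hx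
  obtain ⟨ε, hε, hball⟩ := Metric.isOpen_iff.1 hUopen x (hxU rfl)
  refine ⟨ε/2, by linarith, ?_⟩
  refine lt_of_le_of_lt (measure_mono ?_) (hU.trans_le le_top)
  exact (Metric.closedBall_subset_ball (by linarith)).trans hball

/-- Core covering estimate for part 1. -/
lemma meas_le_of_density_bound (μ : Measure M) (k : ℝ) {c δ : ℝ} (hc : 0 < c) (hδ : 0 < δ)
    (A : Set M)
    (hA : ∀ x ∈ A, ∀ r : ℝ, 0 < r → r ≤ δ →
      μ (closedBall x r) ≤ ENNReal.ofReal c * ENNReal.ofReal (r ^ k)) :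
    μ A ≤ ENNReal.ofReal c * μH[k] A := by
  have hc0 : ENNReal.ofReal c ≠ 0 := (ENNReal.ofReal_pos.2 hc).ne'
  have hctop : ENNReal.ofReal c ≠ ⊤ := ENNReal.ofReal_ne_top
  have key : ∀ F : ℕ → Set M, A ⊆ ⋃ n, F n → (∀ n, EMetric.diam (F n) ≤ ENNReal.ofReal δ) →
      μ A ≤ ENNReal.ofReal c * ∑' n, ⨆ _ : (F n).Nonempty, EMetric.diam (F n) ^ k := by
    intro F hcov hdiam
    have step : ∀ n, μ (F n ∩ A) ≤
        ENNReal.ofReal c * ⨆ _ : (F n).Nonempty, EMetric.diam (F n) ^ k := by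
      intro n
      rcases (F n ∩ A).eq_empty_or_nonempty with hne | hne
      · simp [hne]
      obtain ⟨x, hxF, hxA⟩ := hne
      have hFne : (F n).Nonempty := ⟨x, hxF⟩
      rw [iSup_pos hFne]
      rcases eq_or_ne (EMetric.diam (F n)) 0 with hD | hD
      · -- diameter zero : F n is a subsingleton
        have hsub : F n ∩ A ⊆ {x} := by
          intro y hy
          have := EMetric.diam_eq_zero_iff.1 hD hy.1 hxF
          simpa [Set.mem_singleton_iff] using this
        rcases lt_trichotomy k 0 with hk | hk | hk
        · rw [hD, ENNReal.zero_rpow_of_neg hk, ENNReal.mul_top hc0]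
          exact le_top
        · subst hk
          rw [hD, ENNReal.rpow_zero, mul_one]
          calc μ (F n ∩ A) ≤ μ (closedBall x δ) :=
                measure_mono (hsub.trans
                  (Set.singleton_subset_iff.2 (mem_closedBall_self hδ.le)))
            _ ≤ ENNReal.ofReal c * ENNReal.ofReal (δ ^ (0:ℝ)) := hA x hxA δ hδ le_rfl
            _ = ENNReal.ofReal c := by rw [Real.rpow_zero]; simp
        · -- k > 0 : the point has measure zero
          have hx0 : μ {x} = 0 := by
            have hb : ∀ᶠ r in 𝓝[>] (0:ℝ),
                μ {x} ≤ ENNReal.ofReal c * ENNReal.ofReal (r ^ k) := by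
              filter_upwards [Ioo_mem_nhdsGT_of_mem ⟨le_refl (0:ℝ), hδ⟩] with r hr
              exact le_trans (measure_mono
                  (Set.singleton_subset_iff.2 (mem_closedBall_self hr.1.le)))
                (hA x hxA r hr.1 hr.2.le)
            have htend : Tendsto (fun r : ℝ => ENNReal.ofReal c * ENNReal.ofReal (r ^ k))
                (𝓝[>] (0:ℝ)) (𝓝 0) := by
              have h1 : Tendsto (fun r : ℝ => r ^ k) (𝓝[>] (0:ℝ)) (𝓝 0) := by
                have := (Real.continuousAt_rpow_const 0 k (Or.inr hk.le)).tendsto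
                rw [Real.zero_rpow hk.ne'] at this
                exact this.mono_left nhdsWithin_le_nhds
              have h2 := (ENNReal.continuous_ofReal.tendsto 0).comp h1
              rw [ENNReal.ofReal_zero] at h2
              simpa using (ENNReal.Tendsto.const_mul h2 (Or.inr hctop))
            exact le_antisymm (ge_of_tendsto htend hb) (zero_le)
          rw [hD, ENNReal.zero_rpow_of_pos hk, mul_zero]
          exact le_trans (measure_mono hsub) (le_of_eq hx0)
      · -- positive diameter
        set D := EMetric.diam (F n) with hDdef
        have hDlt : D < ⊤ := lt_of_le_of_lt (hdiam n) ENNReal.ofReal_lt_top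
        set r := D.toReal with hr
        have hrpos : 0 < r := ENNReal.toReal_pos hD hDlt.ne
        have hrδ : r ≤ δ := ENNReal.toReal_le_of_le_ofReal hδ.le (hdiam n)
        have hsub : F n ∩ A ⊆ closedBall x r := by
          intro y hy
          have h1 : edist y x ≤ D := EMetric.edist_le_diam_of_mem hy.1 hxF
          have : dist y x ≤ r := by
            rw [dist_edist]
            exact ENNReal.toReal_mono hDlt.ne h1
          exact this
        calc μ (F n ∩ A) ≤ μ (closedBall x r) := measure_mono hsub
          _ ≤ ENNReal.ofReal c * ENNReal.ofReal (r ^ k) := hA x hxA r hrpos hrδ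
          _ = ENNReal.ofReal c * D ^ k := by
              rw [← ENNReal.ofReal_rpow_of_pos hrpos, ENNReal.ofReal_toReal hDlt.ne]
    calc μ A ≤ μ (⋃ n, F n ∩ A) := by
          refine measure_mono fun y hy => ?_
          obtain ⟨n, hn⟩ := Set.mem_iUnion.1 (hcov hy)
          exact Set.mem_iUnion.2 ⟨n, hn, hy⟩
      _ ≤ ∑' n, μ (F n ∩ A) := measure_iUnion_le _
      _ ≤ ∑' n, ENNReal.ofReal c * ⨆ _ : (F n).Nonempty, EMetric.diam (F n) ^ k :=
          ENNReal.tsum_le_tsum step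
      _ = ENNReal.ofReal c * ∑' n, ⨆ _ : (F n).Nonempty, EMetric.diam (F n) ^ k :=
          ENNReal.tsum_mul_left
  -- now pass to the infimum at scale δ and the supremum over scales
  have h1 : μ A ≤ ENNReal.ofReal c *
      ⨅ (F : ℕ → Set M) (_ : A ⊆ ⋃ n, F n) (_ : ∀ n, EMetric.diam (F n) ≤ ENNReal.ofReal δ),
        ∑' n, ⨆ _ : (F n).Nonempty, EMetric.diam (F n) ^ k := by
    rw [ENNReal.mul_iInf_of_ne hc0 hctop]
    refine le_iInf fun F => ?_
    rw [ENNReal.mul_iInf_of_ne hc0 hctop]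
    refine le_iInf fun hcov => ?_
    rw [ENNReal.mul_iInf_of_ne hc0 hctop]
    exact le_iInf fun hdiam => key F hcov hdiam
  refine h1.trans ?_
  gcongr
  rw [Measure.hausdorffMeasure_apply]
  exact le_iSup₂ (f := fun (r : ℝ≥0∞) (_ : 0 < r) =>
    ⨅ (F : ℕ → Set M) (_ : A ⊆ ⋃ n, F n) (_ : ∀ n, EMetric.diam (F n) ≤ r),
      ∑' n, ⨆ _ : (F n).Nonempty, EMetric.diam (F n) ^ k)
    (ENNReal.ofReal δ) (ENNReal.ofReal_pos.2 hδ)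

lemma measure_eq_zero_of_omega_nonpos [TopologicalSpace.SeparableSpace M] (μ : Measure M)
    {k t : ℝ} (hω : hausdorffNormalization k ≤ 0) {E : Set M}
    (hdens : ∀ x ∈ E, upperDensity k μ x ≤ ENNReal.ofReal t) : μ E = 0 := by
  haveI : SecondCountableTopology M := UniformSpace.secondCountable_of_separable M
  refine measure_null_of_locally_null E fun x hx => ?_
  have h1 : upperDensity k μ x < ⊤ := lt_of_le_of_lt (hdens x hx) ENNReal.ofReal_lt_top
  have h2 := eventually_lt_of_limsup_lt h1
  obtain ⟨u, hu, hIoo⟩ := mem_nhdsGT_iff_exists_Ioo_subset.1 h2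
  rw [Set.mem_Ioi] at hu
  have h3 : μ (closedBall x (u/2)) = 0 := by
    by_contra hne
    have hd0 : ENNReal.ofReal (hausdorffNormalization k * (u/2) ^ k) = 0 :=
      ENNReal.ofReal_eq_zero.2
        (mul_nonpos_iff.2 (Or.inr ⟨hω, (Real.rpow_pos_of_pos (by linarith) k).le⟩))
    have h4 := hIoo (⟨by linarith, by linarith⟩ : u/2 ∈ Set.Ioo (0:ℝ) u)
    rw [Set.mem_setOf_eq, hd0, ENNReal.div_zero hne] at h4
    exact absurd h4 (lt_irrefl _)
  exact ⟨ball x (u/2), mem_nhdsWithin_of_mem_nhds (ball_mem_nhds x (by linarith)),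
    measure_mono_null ball_subset_closedBall h3⟩

lemma part1 [TopologicalSpace.SeparableSpace M] (μ : Measure M) [μ.Regular]
    (k t : ℝ) (ht : 0 < t) (E : Set M) (hE : MeasurableSet E)
    (hdens : ∀ x ∈ E, upperDensity k μ x ≤ ENNReal.ofReal t) :
    μ.restrict E ≤ ENNReal.ofReal (2 ^ k * t) • (normHausdorff M k).restrict E := by
  rcases le_or_gt (hausdorffNormalization k) 0 with hω | hω
  · have hz : μ.restrict E = 0 :=
      Measure.restrict_eq_zero.mpr (measure_eq_zero_of_omega_nonpos μ hω hdens)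
    rw [hz]
    exact Measure.zero_le _
  set ω := hausdorffNormalization k with hωdef
  rw [Measure.le_iff]
  intro s hs
  rw [Measure.restrict_apply hs]
  have h2k : (0:ℝ) < 2 ^ k := Real.rpow_pos_of_pos two_pos k
  have hrhs : (ENNReal.ofReal (2 ^ k * t) • (normHausdorff M k).restrict E) s
      = ENNReal.ofReal (t * ω) * μH[k] (s ∩ E) := by
    rw [Measure.smul_apply, smul_eq_mul]
    unfold normHausdorff
    rw [Measure.restrict_smul, Measure.smul_apply, smul_eq_mul, Measure.restrict_apply hs,
      ← mul_assoc, ← ENNReal.ofReal_mul (by positivity)]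
    congr 2
    field_simp
    ring
  rw [hrhs]
  -- the approximating bounds
  have hbound : ∀ n : ℕ, μ (s ∩ E) ≤ ENNReal.ofReal ((t + 1/(n+1)) * ω) * μH[k] (s ∩ E) := by
    intro n
    set ε : ℝ := 1/(n+1) with hεdef
    have hεpos : 0 < ε := by positivity
    set c := (t + ε) * ω with hcdef
    have hcpos : 0 < c := mul_pos (by linarith) hω
    set Em : ℕ → Set M := fun m => {x ∈ E | ∀ r : ℝ, 0 < r → r ≤ 1/(m+1) →
      μ (closedBall x r) ≤ ENNReal.ofReal c * ENNReal.ofReal (r ^ k)} with hEmdef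
    have hmono : Monotone fun m => s ∩ Em m := by
      intro a b hab y hy
      refine ⟨hy.1, hy.2.1, fun r hr hr2 => hy.2.2 r hr (hr2.trans ?_)⟩
      have : (a:ℝ) + 1 ≤ (b:ℝ) + 1 := by exact_mod_cast by omega
      exact one_div_le_one_div_of_le (by positivity) this
    have hcovE : s ∩ E ⊆ ⋃ m, s ∩ Em m := by
      rintro x ⟨hxs, hxE⟩
      have h1 : upperDensity k μ x < ENNReal.ofReal (t + ε) :=
        lt_of_le_of_lt (hdens x hxE)
          (by rw [ENNReal.ofReal_lt_ofReal_iff (by linarith)]; linarith)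
      have h2 := eventually_lt_of_limsup_lt h1
      obtain ⟨u, hu, hIoo⟩ := mem_nhdsGT_iff_exists_Ioo_subset.1 h2
      rw [Set.mem_Ioi] at hu
      obtain ⟨m, hm⟩ := exists_nat_one_div_lt hu
      refine Set.mem_iUnion.2 ⟨m, hxs, hxE, fun r hr hrle => ?_⟩
      have h3 := hIoo (⟨hr, lt_of_le_of_lt hrle hm⟩ : r ∈ Set.Ioo (0:ℝ) u)
      rw [Set.mem_setOf_eq] at h3
      have hd0 : ENNReal.ofReal (ω * r ^ k) ≠ 0 :=
        (ENNReal.ofReal_pos.2 (mul_pos hω (Real.rpow_pos_of_pos hr k))).ne'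
      calc μ (closedBall x r) ≤ ENNReal.ofReal (t + ε) * ENNReal.ofReal (ω * r ^ k) :=
            (ENNReal.div_le_iff hd0 ENNReal.ofReal_ne_top).1 h3.le
        _ = ENNReal.ofReal c * ENNReal.ofReal (r ^ k) := by
            rw [← ENNReal.ofReal_mul (by linarith), ← ENNReal.ofReal_mul hcpos.le]
            congr 1
            ring
    calc μ (s ∩ E) ≤ μ (⋃ m, s ∩ Em m) := measure_mono hcovE
      _ = ⨆ m, μ (s ∩ Em m) := hmono.directed_le.measure_iUnion
      _ ≤ ENNReal.ofReal c * μH[k] (s ∩ E) := by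
          refine iSup_le fun m => ?_
          have hb := meas_le_of_density_bound μ k hcpos
            (by positivity : (0:ℝ) < 1/(m+1)) (s ∩ Em m)
            (fun x hx r hr hrle => hx.2.2 r hr hrle)
          refine hb.trans ?_
          gcongr
          exact fun x hx => hx.1
  rcases eq_or_ne (μH[k] (s ∩ E)) ⊤ with htop | htop
  · rw [htop, ENNReal.mul_top (ENNReal.ofReal_pos.2 (mul_pos ht hω)).ne']
    exact le_top
  · have h1 : Tendsto (fun n : ℕ => (t + 1/(n+1)) * ω) atTop (𝓝 (t * ω)) := by
      have h0 := tendsto_one_div_add_atTop_nhds_zero_nat (𝕜 := ℝ)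
      have h2 := ((tendsto_const_nhds (x := t) (f := atTop)).add h0).mul_const ω
      simpa using h2
    have htend := ENNReal.Tendsto.mul_const (ENNReal.tendsto_ofReal h1)
      (b := μH[k] (s ∩ E)) (Or.inr htop)
    exact ge_of_tendsto htend (Eventually.of_forall hbound)

lemma upperDensity_lt_top_of_neg (μ : Measure M) [μ.Regular] {k : ℝ} (hk : k < 0)
    (hω : 0 < hausdorffNormalization k) (x : M) : upperDensity k μ x < ⊤ := by
  obtain ⟨ρ, hρ, hρfin⟩ := locfin μ x
  set ω := hausdorffNormalization k with hωdef
  have hev : ∀ᶠ r in 𝓝[>] (0:ℝ),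
      μ (closedBall x r) / ENNReal.ofReal (ω * r ^ k)
        ≤ μ (closedBall x ρ) / ENNReal.ofReal ω := by
    filter_upwards [Ioo_mem_nhdsGT_of_mem ⟨le_refl (0:ℝ), lt_min hρ one_pos⟩] with r hr
    obtain ⟨hr0, hrlt⟩ := hr
    have hr1 : r ≤ 1 := le_of_lt (lt_of_lt_of_le hrlt (min_le_right _ _))
    have hrρ : r ≤ ρ := le_of_lt (lt_of_lt_of_le hrlt (min_le_left _ _))
    have h1 : (1:ℝ) ≤ r ^ k := Real.one_le_rpow_of_pos_of_le_one_of_nonpos hr0 hr1 hk.le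
    have h2 : ENNReal.ofReal ω ≤ ENNReal.ofReal (ω * r ^ k) :=
      ENNReal.ofReal_le_ofReal (by nlinarith)
    exact ENNReal.div_le_div (measure_mono (closedBall_subset_closedBall hrρ)) h2
  refine lt_of_le_of_lt (limsup_le_of_le (by isBoundedDefault) hev) ?_
  exact ENNReal.div_lt_top hρfin.ne (ENNReal.ofReal_pos.2 hω).ne'

lemma diam_metric_closedBall_le (b : M) {R : ℝ} (hR : 0 ≤ R) :
    EMetric.diam (closedBall b R) ≤ ENNReal.ofReal (2 * R) := by
  rw [← Metric.emetric_closedBall hR]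
  refine le_trans EMetric.diam_closedBall ?_
  rw [ENNReal.ofReal_mul (by norm_num)]
  simp

lemma hausdorff_null_of_density_top [TopologicalSpace.SeparableSpace M] (μ : Measure M)
    {k : ℝ} (hk : 0 ≤ k) {V : Set M} (hV : IsOpen V) (hμV : μ V ≠ ⊤)
    {A : Set M} (hAV : A ⊆ V) (hA : ∀ x ∈ A, upperDensity k μ x = ⊤) :
    μH[k] A = 0 := by
  set ω := hausdorffNormalization k with hωdef
  have hω : 0 < ω := omega_pos_of_nonneg hk
  have hω0 : ENNReal.ofReal ω ≠ 0 := (ENNReal.ofReal_pos.2 hω).ne'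
  set C : ℝ≥0∞ := ENNReal.ofReal (8 ^ k) * (μ V / ENNReal.ofReal ω) with hCdef
  have hCne : C ≠ ⊤ :=
    ENNReal.mul_ne_top ENNReal.ofReal_ne_top (ENNReal.div_lt_top hμV hω0).ne
  have main : ∀ m : ℕ, μH[k] A ≤ C * (((m+1 : ℕ) : ℝ≥0∞))⁻¹ := by
    intro m
    set m' : ℝ≥0∞ := ((m+1 : ℕ) : ℝ≥0∞) with hm'def
    have hm'0 : m' ≠ 0 := by simp [hm'def]
    have hm'top : m' ≠ ⊤ := ENNReal.natCast_ne_top _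
    have H : ∀ n : ℕ, ∃ (u : Set M) (w : M → ℝ),
        u.Countable ∧ (∀ b ∈ u, 0 < w b ∧ w b ≤ 1/(n+1)) ∧
        (A ⊆ ⋃ b ∈ u, closedBall b (4 * w b)) ∧
        (∑' b : u, ENNReal.ofReal (ω * w b ^ k)) * m' ≤ μ V := by
      intro n
      have hrad : ∀ x ∈ A, ∃ wx : ℝ, 0 < wx ∧ wx ≤ 1/(n+1) ∧ closedBall x wx ⊆ V ∧
          m' * ENNReal.ofReal (ω * wx ^ k) ≤ μ (closedBall x wx) := by
        intro x hx
        obtain ⟨ε, hε, hball⟩ := Metric.isOpen_iff.1 hV x (hAV hx)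
        have hlim : m' < limsup
            (fun r : ℝ => μ (closedBall x r) / ENNReal.ofReal (ω * r ^ k)) (𝓝[>] (0:ℝ)) := by
          have h := hA x hx
          unfold upperDensity at h
          rw [← hωdef] at h
          rw [h]
          exact ENNReal.natCast_lt_top _
        have hfreq := frequently_lt_of_lt_limsup (by isBoundedDefault) hlim
        obtain ⟨r, hrlt, hrIoo⟩ := (hfreq.and_eventually
          (Ioo_mem_nhdsGT_of_mem ⟨le_refl (0:ℝ), lt_min (by positivity : (0:ℝ) < 1/((n:ℝ)+1)) (by linarith : (0:ℝ) < ε/2)⟩)).exists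
        obtain ⟨hr0, hrmin⟩ := hrIoo
        have hb0 : ENNReal.ofReal (ω * r ^ k) ≠ 0 :=
          (ENNReal.ofReal_pos.2 (mul_pos hω (Real.rpow_pos_of_pos hr0 k))).ne'
        refine ⟨r, hr0, (hrmin.trans_le (min_le_left _ _)).le, ?_, ?_⟩
        · refine (closedBall_subset_ball ?_).trans hball
          have := hrmin.trans_le (min_le_right _ _)
          linarith
        · exact ((ENNReal.lt_div_iff_mul_lt (Or.inl hb0)
            (Or.inl ENNReal.ofReal_ne_top)).1 hrlt).le
      choose! w hw1 hw2 hw3 hw4 using hrad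
      obtain ⟨u, huA, hdisj, hcov⟩ :=
        Vitali.exists_disjoint_subfamily_covering_enlargement_closedBall A id w (1/(n+1))
          (fun a ha => hw2 a ha) 4 (by norm_num)
      have hucount : u.Countable := by
        refine hdisj.countable_of_nonempty_interior fun b hb => ?_
        exact (nonempty_ball.2 (hw1 b (huA hb))).mono ball_subset_interior_closedBall
      refine ⟨u, w, hucount, fun b hb => ⟨hw1 b (huA hb), hw2 b (huA hb)⟩, ?_, ?_⟩
      · intro y hy
        obtain ⟨b, hb, hsub⟩ := hcov y hy
        exact Set.mem_biUnion hb (hsub (mem_closedBall_self (hw1 y hy).le))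
      · have hle : ∀ b : u, m' * ENNReal.ofReal (ω * w b ^ k) ≤ μ (closedBall (b:M) (w b)) :=
          fun b => hw4 b (huA b.2)
        calc (∑' b : u, ENNReal.ofReal (ω * w b ^ k)) * m'
            = ∑' b : u, m' * ENNReal.ofReal (ω * w b ^ k) := by
              rw [← ENNReal.tsum_mul_right]
              exact tsum_congr fun b => mul_comm _ _
          _ ≤ ∑' b : u, μ (closedBall (b:M) (w b)) := ENNReal.tsum_le_tsum hle
          _ = μ (⋃ b ∈ u, closedBall (id b) (w b)) :=
              (measure_biUnion hucount hdisj fun b _ => measurableSet_closedBall).symm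
          _ ≤ μ V := measure_mono (Set.iUnion₂_subset fun b hb => hw3 b (huA hb))
    choose u w hucount hw hcov hsum using H
    haveI : ∀ n : ℕ, Countable ↑(u n) := fun n => (hucount n).to_subtype
    have hrtend : Tendsto (fun n : ℕ => ENNReal.ofReal (8 / (n+1))) atTop (𝓝 0) := by
      have h0 : Tendsto (fun n : ℕ => 8 * (1 / ((n:ℝ)+1))) atTop (𝓝 (8 * 0)) :=
        tendsto_one_div_add_atTop_nhds_zero_nat.const_mul 8
      have h1 : Tendsto (fun n : ℕ => 8 / ((n:ℝ)+1)) atTop (𝓝 0) := by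
        simpa [mul_one_div, div_eq_mul_inv] using h0
      simpa [ENNReal.ofReal_zero] using ENNReal.tendsto_ofReal h1
    have hbound := Measure.hausdorffMeasure_le_liminf_tsum (l := atTop) k A
      (fun n : ℕ => ENNReal.ofReal (8 / (n+1)))
      hrtend (fun n (i : u n) => closedBall (i : M) (4 * w n i))
      (Eventually.of_forall fun n => ?_) (Eventually.of_forall fun n => ?_)
    rotate_left
    · intro i
      have h0 : 0 < w n i := (hw n i i.2).1
      have h2 : w n i ≤ 1/((n:ℝ)+1) := (hw n i i.2).2
      refine (diam_metric_closedBall_le (i:M) (by linarith : (0:ℝ) ≤ 4 * w n i)).trans ?_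
      refine ENNReal.ofReal_le_ofReal ?_
      rw [div_eq_mul_one_div]
      linarith
    · intro y hy
      obtain ⟨b, hb, hmem⟩ := Set.mem_iUnion₂.1 (hcov n hy)
      exact Set.mem_iUnion.2 ⟨⟨b, hb⟩, hmem⟩
    refine hbound.trans (liminf_le_of_frequently_le (Frequently.of_forall fun n => ?_))
    have hsum' : (∑' i : u n, ENNReal.ofReal (w n i ^ k))
        ≤ μ V / (ENNReal.ofReal ω * m') := by
      rw [ENNReal.le_div_iff_mul_le (Or.inl (mul_ne_zero hω0 hm'0))
        (Or.inl (ENNReal.mul_ne_top ENNReal.ofReal_ne_top hm'top))]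
      calc (∑' i : u n, ENNReal.ofReal (w n i ^ k)) * (ENNReal.ofReal ω * m')
          = (∑' i : u n, ENNReal.ofReal (ω * w n i ^ k)) * m' := by
            rw [← mul_assoc, ← ENNReal.tsum_mul_right]
            congr 1
            refine tsum_congr fun i => ?_
            rw [← ENNReal.ofReal_mul (Real.rpow_nonneg ((hw n i i.2).1.le) k)]
            congr 1
            ring
        _ ≤ μ V := hsum n
    calc (∑' i : u n, EMetric.diam (closedBall (i:M) (4 * w n i)) ^ k)
        ≤ ∑' i : u n, ENNReal.ofReal (8 ^ k) * ENNReal.ofReal (w n i ^ k) := by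
          refine ENNReal.tsum_le_tsum fun i => ?_
          have h0 : 0 < w n i := (hw n i i.2).1
          have hd := diam_metric_closedBall_le (i:M) (by linarith : (0:ℝ) ≤ 4 * w n i)
          have e1 : ENNReal.ofReal (8 ^ k) * ENNReal.ofReal (w n i ^ k)
              = ENNReal.ofReal (2 * (4 * w n i)) ^ k := by
            rw [← ENNReal.ofReal_mul (by positivity : (0:ℝ) ≤ 8 ^ k),
              ← Real.mul_rpow (by norm_num) h0.le,
              show (8:ℝ) * w n i = 2 * (4 * w n i) by ring,
              ENNReal.ofReal_rpow_of_pos (by linarith)]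
          exact le_trans (ENNReal.rpow_le_rpow hd hk) (le_of_eq e1.symm)
      _ = ENNReal.ofReal (8^k) * ∑' i : u n, ENNReal.ofReal (w n i ^ k) :=
          ENNReal.tsum_mul_left
      _ ≤ ENNReal.ofReal (8^k) * (μ V / (ENNReal.ofReal ω * m')) := by gcongr
      _ = C * m'⁻¹ := by
          rw [hCdef, div_eq_mul_inv, div_eq_mul_inv,
            ENNReal.mul_inv (Or.inl hω0) (Or.inl ENNReal.ofReal_ne_top)]
          ring
  have htend : Tendsto (fun m : ℕ => C * (((m+1:ℕ):ℝ≥0∞))⁻¹) atTop (𝓝 0) := by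
    have h1 : Tendsto (fun m : ℕ => (((m+1:ℕ):ℝ≥0∞))⁻¹) atTop (𝓝 0) :=
      ENNReal.tendsto_inv_nat_nhds_zero.comp (tendsto_add_atTop_nat 1)
    have h2 := ENNReal.Tendsto.const_mul h1 (Or.inr hCne)
    simpa using h2
  exact le_antisymm (ge_of_tendsto htend (Eventually.of_forall main)) (zero_le)


lemma part2 [TopologicalSpace.SeparableSpace M] (μ : Measure M) [μ.Regular] (k : ℝ) :
    ∀ᵐ x ∂(normHausdorff M k), upperDensity k μ x < ⊤ := by
  rcases le_or_gt (hausdorffNormalization k) 0 with hω | hω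
  · have hz : normHausdorff M k = 0 := by
      unfold normHausdorff
      have h2k : (0:ℝ) < 2 ^ k := Real.rpow_pos_of_pos two_pos k
      rw [ENNReal.ofReal_eq_zero.2 (div_nonpos_of_nonpos_of_nonneg hω h2k.le), zero_smul]
    rw [hz]
    simp
  rcases lt_or_ge k 0 with hk | hk
  · exact ae_of_all _ (upperDensity_lt_top_of_neg μ hk hω)
  · haveI : SecondCountableTopology M := UniformSpace.secondCountable_of_separable M
    have hnull : μH[k] {x | upperDensity k μ x = ⊤} = 0 := by
      refine measure_null_of_locally_null _ fun x hx => ?_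
      obtain ⟨ρ, hρ, hρfin⟩ := locfin μ x
      refine ⟨{y | upperDensity k μ y = ⊤} ∩ ball x ρ,
        inter_mem_nhdsWithin _ (ball_mem_nhds x hρ), ?_⟩
      refine hausdorff_null_of_density_top μ hk isOpen_ball
        (lt_of_le_of_lt (measure_mono ball_subset_closedBall) hρfin).ne
        Set.inter_subset_right (fun y hy => hy.1)
    rw [ae_iff]
    have hset : {x | ¬ upperDensity k μ x < ⊤} = {x | upperDensity k μ x = ⊤} := by
      ext x
      simp [lt_top_iff_ne_top]
    rw [hset]
    unfold normHausdorff
    rw [Measure.smul_apply, smul_eq_mul, hnull, mul_zero]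

end helpers

/-- **Upper density upper bound implies measure upper bound.**
If μ is a Borel regular Radon measure on a separable metric space, E is Borel, t > 0,
and Θ*_k(μ,x) ≤ t for every x ∈ E, then μ ⌞ E ≤ 2^k·t·ℋ^k ⌞ E. In particular
Θ*_k(μ,x) < ∞ for ℋ^k-a.e. x ∈ M. -/
theorem stmt_3 {M : Type*} [MetricSpace M] [TopologicalSpace.SeparableSpace M]
    [MeasurableSpace M] [BorelSpace M]
    (μ : Measure M) [μ.Regular]
    (k t : ℝ) (ht : 0 < t) (E : Set M) (hE : MeasurableSet E)
    (hdens : ∀ x ∈ E, upperDensity k μ x ≤ ENNReal.ofReal t) :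
    μ.restrict E ≤ ENNReal.ofReal (2 ^ k * t) • (normHausdorff M k).restrict E ∧
    ∀ᵐ x ∂(normHausdorff M k), upperDensity k μ x < ⊤ :=
  ⟨part1 μ k t ht E hE hdens, part2 μ k⟩
end

section
/- Let (ℝⁿ,X) be an equiregular CC space of homogeneous dimension Q, with local Ahlfors Q-regularity and the relative isoperimetric inequality min{ℒⁿ(E∩B(p,r)), ℒⁿ(B(p,r)\E)}^{(Q−1)/Q} ≤ C·P_X(E, B(p,r)). Let Ω ⊆ ℝⁿ be open, and let (E_h) be a sequence of measurable sets in Ω with ℒⁿ(E_h) → 0 and P_X(E_h; Ω) → 0. Then for every α ∈ (0,1): ℋ^{Q−1}( ⋂_{h∈ℕ} { p ∈ Ω : limsup_{r→0} ℒⁿ(E_h ∩ B(p,r)) / ℒⁿ(B(p,r)) ≥ α } ) = 0, where ℋ^{Q−1} is the (Q−1)-dimensional Hausdorff measure for the CC metric. -/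
open MeasureTheory Metric Filter Topology
open scoped ENNReal MeasureTheory

open Metric Set

/-- Radius selection: a radius `ρ < r0` at which the density of `F` in `ball p ρ` is
exactly `α/2` (both inequalities). -/
lemma aux_select {M : Type*} [MetricSpace M] [MeasurableSpace M] [BorelSpace M]
    (μ : Measure M) (hsphere : ∀ (p : M) (r : ℝ), μ (sphere p r) = 0)
    {F : Set M} (hFm : MeasurableSet F)
    {α : ℝ} (hα0 : 0 < α)
    {p : M} {r0 : ℝ} (hr0 : 0 < r0)
    (hfin : μ (ball p r0) ≠ ∞)
    (hdens : ENNReal.ofReal α ≤ limsup (fun r : ℝ => μ (F ∩ ball p r) / μ (ball p r)) (𝓝[>] 0))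
    (hsmall : μ (F ∩ ball p r0) < ENNReal.ofReal (α/2) * μ (ball p r0)) :
    ∃ ρ, 0 < ρ ∧ ρ < r0 ∧
      ENNReal.ofReal (α/2) * μ (ball p ρ) ≤ μ (F ∩ ball p ρ) ∧
      μ (F ∩ ball p ρ) ≤ ENNReal.ofReal (α/2) * μ (ball p ρ) := by
  set c : ℝ≥0∞ := ENNReal.ofReal (α/2) with hc
  have hclt : c < ENNReal.ofReal α := by
    rw [hc]
    exact ENNReal.ofReal_lt_ofReal_iff hα0 |>.2 (by linarith)
  set T : Set ℝ := {r | r ∈ Set.Ioc (0:ℝ) r0 ∧ c * μ (ball p r) ≤ μ (F ∩ ball p r)} with hT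
  -- T is nonempty
  have hTne : T.Nonempty := by
    have hfreq : ∃ᶠ r in 𝓝[>] (0:ℝ), c < μ (F ∩ ball p r) / μ (ball p r) :=
      frequently_lt_of_lt_limsup (by isBoundedDefault) (lt_of_lt_of_le hclt hdens)
    have hmem : Set.Ioo (0:ℝ) r0 ∈ 𝓝[>] (0:ℝ) := Ioo_mem_nhdsGT_of_mem ⟨le_refl _, hr0⟩
    rcases (hfreq.and_eventually (eventually_of_mem hmem (fun x hx => hx))).exists with
      ⟨r, hrlt, hrIoo⟩
    refine ⟨r, ⟨hrIoo.1, le_of_lt hrIoo.2⟩, ?_⟩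
    have hb0 : μ (ball p r) ≠ 0 := by
      intro h0
      have ha : μ (F ∩ ball p r) = 0 :=
        le_antisymm (h0 ▸ measure_mono Set.inter_subset_right) zero_le
      rw [h0, ha, ENNReal.zero_div] at hrlt
      exact absurd hrlt (by simp)
    have hbt : μ (ball p r) ≠ ∞ :=
      ((measure_mono (ball_subset_ball hrIoo.2.le)).trans_lt hfin.lt_top).ne
    exact le_of_lt ((ENNReal.lt_div_iff_mul_lt (Or.inl hb0) (Or.inl hbt)).1 hrlt)
  have hTbdd : BddAbove T := ⟨r0, fun r hr => hr.1.2⟩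
  set ρ := sSup T with hρ
  have hρpos : 0 < ρ := by
    rcases hTne with ⟨t, ht⟩
    exact lt_of_lt_of_le ht.1.1 (le_csSup hTbdd ht)
  have hρle : ρ ≤ r0 := csSup_le hTne (fun r hr => hr.1.2)
  -- lower bound at ρ, by continuity from below
  have hlower : c * μ (ball p ρ) ≤ μ (F ∩ ball p ρ) := by
    set s : ℕ → ℝ := fun n => ρ - ρ / (n + 2) with hs
    have hsmono : Monotone fun n : ℕ => ball p (s n) := by
      intro a b hab
      apply ball_subset_ball
      have : (ρ:ℝ) / (b + 2) ≤ ρ / (a + 2) := by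
        apply div_le_div_of_nonneg_left hρpos.le (by positivity) (by exact_mod_cast by omega)
      simp only [hs]; linarith
    have hsU : (⋃ n, ball p (s n)) = ball p ρ := by
      apply Set.Subset.antisymm
      · refine Set.iUnion_subset fun n => ball_subset_ball ?_
        have : 0 < (ρ:ℝ) / (n + 2) := by positivity
        simp only [hs]; linarith
      · intro x hx
        rw [mem_ball] at hx
        have : Tendsto s atTop (𝓝 ρ) := by
          have h1 : Tendsto (fun n : ℕ => (ρ:ℝ) / (n + 2)) atTop (𝓝 0) := by
            apply Tendsto.div_atTop tendsto_const_nhds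
            exact tendsto_atTop_add_const_right _ _ tendsto_natCast_atTop_atTop
          simpa [hs] using tendsto_const_nhds.sub h1
        rcases (this.eventually (eventually_gt_nhds hx)).exists with ⟨n, hn⟩
        exact Set.mem_iUnion.2 ⟨n, mem_ball.2 hn⟩
    have hμU : μ (ball p ρ) = ⨆ n, μ (ball p (s n)) := by
      rw [← hsU]; exact hsmono.measure_iUnion
    rw [hμU, ENNReal.mul_iSup]
    refine iSup_le fun n => ?_
    have hslt : s n < ρ := by
      have : 0 < (ρ:ℝ) / (n + 2) := by positivity
      simp only [hs]; linarith
    rcases exists_lt_of_lt_csSup hTne hslt with ⟨r, hrT, hsr⟩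
    calc c * μ (ball p (s n)) ≤ c * μ (ball p r) := by
          exact mul_le_mul_right (measure_mono (ball_subset_ball hsr.le)) _
      _ ≤ μ (F ∩ ball p r) := hrT.2
      _ ≤ μ (F ∩ ball p ρ) := measure_mono (Set.inter_subset_inter_right _
          (ball_subset_ball (le_csSup hTbdd hrT)))
  -- ρ < r0
  have hρlt : ρ < r0 := by
    rcases lt_or_eq_of_le hρle with h | h
    · exact h
    · exfalso
      rw [h] at hlower
      exact absurd (lt_of_le_of_lt hlower hsmall) (lt_irrefl _)
  -- upper bound at ρ, by continuity from above
  have hupper : μ (F ∩ ball p ρ) ≤ c * μ (ball p ρ) := by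
    set t : ℕ → ℝ := fun n => ρ + (r0 - ρ) / (n + 1) with ht
    have htρ : ∀ n : ℕ, ρ < t n ∧ t n ≤ r0 := by
      intro n
      constructor
      · have : 0 < (r0 - ρ) / (n + 1 : ℝ) := by
          apply div_pos (by linarith) (by positivity)
        simp only [ht]; linarith
      · have h1 : (r0 - ρ) / (n + 1 : ℝ) ≤ (r0 - ρ) := by
          apply div_le_self (by linarith) (by exact_mod_cast by omega)
        simp only [ht]; linarith
    have htmono : Antitone fun n : ℕ => ball p (t n) := by
      intro a b hab
      apply ball_subset_ball
      have : (r0 - ρ) / (b + 2:ℝ) ≤ (r0 - ρ) / (a + 2) := by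
        apply div_le_div_of_nonneg_left (by linarith) (by positivity) (by exact_mod_cast by omega)
      have : (r0 - ρ) / (b + 1:ℝ) ≤ (r0 - ρ) / (a + 1) := by
        apply div_le_div_of_nonneg_left (by linarith) (by positivity) (by exact_mod_cast by omega)
      simp only [ht]; linarith
    have hbI : (⋂ n, ball p (t n)) = closedBall p ρ := by
      apply Set.Subset.antisymm
      · intro x hx
        rw [mem_closedBall]
        by_contra hcon
        push_neg at hcon
        have htend : Tendsto t atTop (𝓝 ρ) := by
          have h1 : Tendsto (fun n : ℕ => (r0 - ρ) / (n + 1)) atTop (𝓝 0) := by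
            apply Tendsto.div_atTop tendsto_const_nhds
            exact tendsto_atTop_add_const_right _ _ tendsto_natCast_atTop_atTop
          simpa [ht] using tendsto_const_nhds.add h1
        rcases (htend.eventually (eventually_lt_nhds hcon)).exists with ⟨n, hn⟩
        have := Set.mem_iInter.1 hx n
        rw [mem_ball] at this
        linarith
      · intro x hx
        rw [mem_closedBall] at hx
        exact Set.mem_iInter.2 fun n => mem_ball.2 (lt_of_le_of_lt hx (htρ n).1)
    have hnm : ∀ n : ℕ, NullMeasurableSet (F ∩ ball p (t n)) μ :=
      fun n => (hFm.inter measurableSet_ball).nullMeasurableSet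
    have hfin' : ∀ n, μ (F ∩ ball p (t n)) ≠ ∞ := fun n =>
      (lt_of_le_of_lt (measure_mono (Set.inter_subset_right.trans
        (ball_subset_ball (htρ n).2))) hfin.lt_top).ne
    have h1 : μ (F ∩ closedBall p ρ) = ⨅ n, μ (F ∩ ball p (t n)) := by
      have : (⋂ n, F ∩ ball p (t n)) = F ∩ closedBall p ρ := by
        rw [← Set.inter_iInter, hbI]
      rw [← this]
      exact Antitone.measure_iInter
        (fun a b hab => Set.inter_subset_inter_right _ (htmono hab)) hnm ⟨0, hfin' 0⟩
    have h2 : μ (closedBall p ρ) = ⨅ n, μ (ball p (t n)) := by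
      rw [← hbI]
      exact Antitone.measure_iInter htmono
        (fun n => measurableSet_ball.nullMeasurableSet)
        ⟨0, (lt_of_le_of_lt (measure_mono (ball_subset_ball (htρ 0).2)) hfin.lt_top).ne⟩
    have hcbeq : μ (closedBall p ρ) = μ (ball p ρ) := by
      apply le_antisymm
      · calc μ (closedBall p ρ) ≤ μ (ball p ρ ∪ sphere p ρ) :=
              measure_mono (by rw [ball_union_sphere])
          _ ≤ μ (ball p ρ) + μ (sphere p ρ) := measure_union_le _ _
          _ = μ (ball p ρ) := by rw [hsphere p ρ, add_zero]
      · exact measure_mono ball_subset_closedBall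
    have hTub : ∀ n, μ (F ∩ ball p (t n)) ≤ c * μ (ball p (t n)) := by
      intro n
      by_contra hcon
      push_neg at hcon
      have : t n ∈ T := ⟨⟨lt_trans hρpos (htρ n).1, (htρ n).2⟩, hcon.le⟩
      exact absurd (le_csSup hTbdd this) (not_le.2 (htρ n).1)
    calc μ (F ∩ ball p ρ) ≤ μ (F ∩ closedBall p ρ) :=
          measure_mono (Set.inter_subset_inter_right _ ball_subset_closedBall)
      _ = ⨅ n, μ (F ∩ ball p (t n)) := h1
      _ ≤ ⨅ n, c * μ (ball p (t n)) := le_iInf fun n => (iInf_le _ n).trans (hTub n)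
      _ = c * ⨅ n, μ (ball p (t n)) := by
          rw [ENNReal.mul_iInf_of_ne (by simp [hc]; positivity) ENNReal.ofReal_ne_top]
      _ = c * μ (closedBall p ρ) := by rw [h2]
      _ = c * μ (ball p ρ) := by rw [hcbeq]
  exact ⟨ρ, hρpos, hρlt, hlower, hupper⟩

/-- Covering construction: a countable cover of `S` by enlarged balls of small diameter whose
`(Q-1)`-sum is controlled by the perimeter of `F` in `Ω`. -/
lemma aux_cover {M : Type*} [MetricSpace M] [MeasurableSpace M] [BorelSpace M]
    [TopologicalSpace.SeparableSpace M]
    (μ : Measure M) (hsphere : ∀ (p : M) (r : ℝ), μ (sphere p r) = 0)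
    {Q : ℝ} (hQ : 1 < Q) (Per : Set M → Measure M) (Ω : Set M)
    {α : ℝ} (hα : α ∈ Set.Ioo (0:ℝ) 1)
    {C R : ℝ} (hC : 0 < C) (hR : 0 < R)
    (S : Set M)
    (hS : ∀ p ∈ S, ball p R ⊆ Ω ∧
      (∀ r ∈ Set.Ioo (0:ℝ) R, ENNReal.ofReal (r ^ Q / C) ≤ μ (ball p r) ∧
        μ (ball p r) ≤ ENNReal.ofReal (C * r ^ Q)))
    {F : Set M} (hFm : MeasurableSet F)
    (hiso' : ∀ p ∈ S, ∀ r ∈ Set.Ioo (0:ℝ) R,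
      (min (μ (F ∩ ball p r)) (μ (ball p r \ F))) ^ ((Q - 1) / Q)
        ≤ ENNReal.ofReal C * Per F (ball p r))
    (hdens : ∀ p ∈ S,
      ENNReal.ofReal α ≤ limsup (fun r : ℝ => μ (F ∩ ball p r) / μ (ball p r)) (𝓝[>] 0))
    {δ : ℝ} (hδ : 0 < δ)
    (hFsmall : μ F < ENNReal.ofReal ((α/2) * ((min (δ/8) (R/2)) ^ Q / C))) :
    ∃ (u : Set M) (t : M → Set M), u.Countable ∧ (S ⊆ ⋃ b ∈ u, t b) ∧
      (∀ b ∈ u, EMetric.diam (t b) ≤ ENNReal.ofReal δ) ∧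
      ∑' b : u, EMetric.diam (t b) ^ (Q - 1) ≤
        ENNReal.ofReal (8 ^ (Q-1) * C /
          (min (α/2) (1 - α/2) / C) ^ ((Q-1)/Q)) * Per F Ω := by
  obtain ⟨hα0, hα1⟩ := hα
  set r0 : ℝ := min (δ/8) (R/2) with hr0def
  have hr0 : 0 < r0 := lt_min (by linarith) (by linarith)
  have hr0R : r0 < R := lt_of_le_of_lt (min_le_right _ _) (by linarith)
  have h8r0 : 8 * r0 ≤ δ := by
    have := min_le_left (δ/8) (R/2); simp only [← hr0def] at this; linarith
  set m : ℝ := min (α/2) (1 - α/2) with hmdef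
  have hm : 0 < m := lt_min (by linarith) (by linarith)
  have hm2 : m ≤ α/2 := min_le_left _ _
  have hm3 : m ≤ 1 - α/2 := min_le_right _ _
  have hQ0 : (0:ℝ) < Q := by linarith
  set θ : ℝ := (Q-1)/Q with hθdef
  have hθ : 0 < θ := div_pos (by linarith) hQ0
  set c1 : ℝ := (m/C) ^ θ with hc1def
  have hc1 : 0 < c1 := Real.rpow_pos_of_pos (div_pos hm hC) _
  set d : ℝ := Q - 1 with hddef
  have hd : 0 < d := by linarith
  -- Step 1: choice of radii
  have hsel : ∀ p ∈ S, ∃ ρ, 0 < ρ ∧ ρ < r0 ∧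
      ENNReal.ofReal (ρ ^ d) ≤ ENNReal.ofReal (C / c1) * Per F (ball p ρ) := by
    intro p hp
    obtain ⟨hballΩ, hAhl⟩ := hS p hp
    have hr0Ioo : r0 ∈ Set.Ioo (0:ℝ) R := ⟨hr0, hr0R⟩
    have hfin : μ (ball p r0) ≠ ∞ :=
      (lt_of_le_of_lt (hAhl r0 hr0Ioo).2 ENNReal.ofReal_lt_top).ne
    have hsmall : μ (F ∩ ball p r0) < ENNReal.ofReal (α/2) * μ (ball p r0) := by
      calc μ (F ∩ ball p r0) ≤ μ F := measure_mono Set.inter_subset_left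
        _ < ENNReal.ofReal ((α/2) * (r0 ^ Q / C)) := hFsmall
        _ = ENNReal.ofReal (α/2) * ENNReal.ofReal (r0 ^ Q / C) := by
            rw [ENNReal.ofReal_mul (by linarith)]
        _ ≤ ENNReal.ofReal (α/2) * μ (ball p r0) :=
            mul_le_mul_right (hAhl r0 hr0Ioo).1 _
    obtain ⟨ρ, hρ0, hρr0, hlow, hup⟩ :=
      aux_select μ hsphere hFm hα0 hr0 hfin (hdens p hp) hsmall
    have hρIoo : ρ ∈ Set.Ioo (0:ℝ) R := ⟨hρ0, hρr0.trans hr0R⟩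
    have hfinB : μ (ball p ρ) ≠ ∞ :=
      (lt_of_le_of_lt (hAhl ρ hρIoo).2 ENNReal.ofReal_lt_top).ne
    have hfinFB : μ (F ∩ ball p ρ) ≠ ∞ :=
      (lt_of_le_of_lt (measure_mono Set.inter_subset_right) hfinB.lt_top).ne
    -- min bound
    have hdiff : μ (ball p ρ \ F) = μ (ball p ρ) - μ (F ∩ ball p ρ) := by
      have h1 : ball p ρ \ F = ball p ρ \ (F ∩ ball p ρ) := by
        rw [Set.diff_inter_self_eq_diff]
      rw [h1, measure_diff Set.inter_subset_right
        (hFm.inter measurableSet_ball).nullMeasurableSet hfinFB]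
    have hmin : ENNReal.ofReal m * μ (ball p ρ) ≤
        min (μ (F ∩ ball p ρ)) (μ (ball p ρ \ F)) := by
      refine le_min ?_ ?_
      · calc ENNReal.ofReal m * μ (ball p ρ)
            ≤ ENNReal.ofReal (α/2) * μ (ball p ρ) :=
              mul_le_mul_left (ENNReal.ofReal_le_ofReal hm2) _
          _ ≤ μ (F ∩ ball p ρ) := hlow
      · have h2 : μ (ball p ρ) - ENNReal.ofReal (α/2) * μ (ball p ρ) ≤ μ (ball p ρ \ F) := by
          rw [hdiff]
          exact tsub_le_tsub_left hup _
        calc ENNReal.ofReal m * μ (ball p ρ)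
            ≤ ENNReal.ofReal (1 - α/2) * μ (ball p ρ) :=
              mul_le_mul_left (ENNReal.ofReal_le_ofReal hm3) _
          _ = (1 - ENNReal.ofReal (α/2)) * μ (ball p ρ) := by
              rw [← ENNReal.ofReal_one, ← ENNReal.ofReal_sub _ (by linarith)]
          _ = 1 * μ (ball p ρ) - ENNReal.ofReal (α/2) * μ (ball p ρ) := by
              rw [ENNReal.sub_mul (fun _ _ => hfinB)]
          _ = μ (ball p ρ) - ENNReal.ofReal (α/2) * μ (ball p ρ) := by rw [one_mul]
          _ ≤ μ (ball p ρ \ F) := h2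
    -- isoperimetric
    have hiso2 := hiso' p hp ρ hρIoo
    have hlhs : ENNReal.ofReal (c1 * ρ ^ d) ≤
        (min (μ (F ∩ ball p ρ)) (μ (ball p ρ \ F))) ^ θ := by
      have h1 : ENNReal.ofReal (m * (ρ ^ Q / C)) ≤
          min (μ (F ∩ ball p ρ)) (μ (ball p ρ \ F)) := by
        rw [ENNReal.ofReal_mul hm.le]
        exact le_trans (mul_le_mul_right (hAhl ρ hρIoo).1 _) hmin
      have h2 := ENNReal.rpow_le_rpow h1 hθ.le
      have h3 : (0:ℝ) < m * (ρ ^ Q / C) := by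
        have : (0:ℝ) < ρ ^ Q := Real.rpow_pos_of_pos hρ0 _
        positivity
      rw [ENNReal.ofReal_rpow_of_pos h3] at h2
      have h4 : (m * (ρ ^ Q / C)) ^ θ = c1 * ρ ^ d := by
        have hρQ : (0:ℝ) ≤ ρ ^ Q := (Real.rpow_pos_of_pos hρ0 _).le
        have e1 : m * (ρ ^ Q / C) = (m / C) * ρ ^ Q := by ring
        rw [e1, Real.mul_rpow (div_pos hm hC).le hρQ, ← Real.rpow_mul hρ0.le]
        congr 1
        rw [hθdef, hddef]
        field_simp
      rwa [h4] at h2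
    have hfinal : ENNReal.ofReal (c1 * ρ ^ d) ≤ ENNReal.ofReal C * Per F (ball p ρ) :=
      le_trans hlhs hiso2
    refine ⟨ρ, hρ0, hρr0, ?_⟩
    have e2 : ENNReal.ofReal (ρ ^ d) = ENNReal.ofReal c1⁻¹ * ENNReal.ofReal (c1 * ρ ^ d) := by
      rw [← ENNReal.ofReal_mul (by positivity)]
      congr 1
      field_simp
    calc ENNReal.ofReal (ρ ^ d) = ENNReal.ofReal c1⁻¹ * ENNReal.ofReal (c1 * ρ ^ d) := e2
      _ ≤ ENNReal.ofReal c1⁻¹ * (ENNReal.ofReal C * Per F (ball p ρ)) :=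
          mul_le_mul_right hfinal _
      _ = ENNReal.ofReal (C / c1) * Per F (ball p ρ) := by
          rw [← mul_assoc, ← ENNReal.ofReal_mul (by positivity)]
          congr 2
          field_simp
  choose! ρ hρ0 hρr0 hρper using hsel
  -- Step 2: Vitali
  obtain ⟨u, huS, hdisj, hcover⟩ :=
    Vitali.exists_disjoint_subfamily_covering_enlargement_closedBall S (id : M → M) ρ r0
      (fun a ha => (hρr0 a ha).le) 4 (by norm_num)
  refine ⟨u, fun b => closedBall b (4 * ρ b), ?_, ?_, ?_, ?_⟩
  · -- countable
    have hdisj' : u.PairwiseDisjoint (fun b => ball b (ρ b)) := fun a ha b hb hab =>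
      (hdisj ha hb hab).mono ball_subset_closedBall ball_subset_closedBall
    exact hdisj'.countable_of_isOpen (fun b _ => isOpen_ball)
      (fun b hb => nonempty_ball.2 (hρ0 b (huS hb)))
  · -- cover
    intro a ha
    obtain ⟨b, hb, hsub⟩ := hcover a ha
    exact Set.mem_biUnion hb (hsub (mem_closedBall_self (hρ0 a ha).le))
  · -- diam
    intro b hb
    have h0 : (0:ℝ) ≤ 4 * ρ b := by linarith [hρ0 b (huS hb)]
    calc EMetric.diam (closedBall b (4 * ρ b))
        ≤ 2 * ENNReal.ofReal (4 * ρ b) := by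
          rw [← Metric.emetric_closedBall h0]
          exact EMetric.diam_closedBall
      _ = ENNReal.ofReal (8 * ρ b) := by
          rw [← ENNReal.ofReal_ofNat, ← ENNReal.ofReal_mul (by norm_num)]
          congr 1; ring
      _ ≤ ENNReal.ofReal δ := ENNReal.ofReal_le_ofReal
          (by have := (hρr0 b (huS hb)).le; linarith)
  · -- sum
    have hterm : ∀ b ∈ u, EMetric.diam (closedBall b (4 * ρ b)) ^ d ≤
        ENNReal.ofReal (8 ^ d * (C / c1)) * Per F (ball b (ρ b)) := by
      intro b hb
      have hbS := huS hb
      have hρb := hρ0 b hbS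
      have h1 : EMetric.diam (closedBall b (4 * ρ b)) ≤ ENNReal.ofReal (8 * ρ b) := by
        rw [← Metric.emetric_closedBall (by linarith : (0:ℝ) ≤ 4 * ρ b)]
        refine le_trans EMetric.diam_closedBall ?_
        rw [← ENNReal.ofReal_ofNat, ← ENNReal.ofReal_mul (by norm_num)]
        exact ENNReal.ofReal_le_ofReal (le_of_eq (by ring))
      calc EMetric.diam (closedBall b (4 * ρ b)) ^ d
          ≤ ENNReal.ofReal (8 * ρ b) ^ d := ENNReal.rpow_le_rpow h1 hd.le
        _ = ENNReal.ofReal ((8 * ρ b) ^ d) := ENNReal.ofReal_rpow_of_pos (by linarith)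
        _ = ENNReal.ofReal (8 ^ d * ρ b ^ d) := by
            rw [Real.mul_rpow (by norm_num) hρb.le]
        _ = ENNReal.ofReal (8 ^ d) * ENNReal.ofReal (ρ b ^ d) := by
            rw [ENNReal.ofReal_mul (by positivity)]
        _ ≤ ENNReal.ofReal (8 ^ d) * (ENNReal.ofReal (C / c1) * Per F (ball b (ρ b))) :=
            mul_le_mul_right (hρper b hbS) _
        _ = ENNReal.ofReal (8 ^ d * (C / c1)) * Per F (ball b (ρ b)) := by
            rw [← mul_assoc, ← ENNReal.ofReal_mul (by positivity)]
    have hdisj' : u.PairwiseDisjoint (fun b => ball b (ρ b)) := fun a ha b hb hab =>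
      (hdisj ha hb hab).mono ball_subset_closedBall ball_subset_closedBall
    have hcnt : u.Countable := hdisj'.countable_of_isOpen (fun b _ => isOpen_ball)
      (fun b hb => nonempty_ball.2 (hρ0 b (huS hb)))
    calc ∑' b : u, EMetric.diam (closedBall (b:M) (4 * ρ b)) ^ d
        ≤ ∑' b : u, ENNReal.ofReal (8 ^ d * (C / c1)) * Per F (ball (b:M) (ρ b)) :=
          ENNReal.tsum_le_tsum (fun b => hterm b b.2)
      _ = ENNReal.ofReal (8 ^ d * (C / c1)) * ∑' b : u, Per F (ball (b:M) (ρ b)) :=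
          ENNReal.tsum_mul_left
      _ = ENNReal.ofReal (8 ^ d * (C / c1)) * Per F (⋃ b ∈ u, ball b (ρ b)) := by
          rw [measure_biUnion hcnt hdisj' (fun b _ => measurableSet_ball)]
      _ ≤ ENNReal.ofReal (8 ^ d * (C / c1)) * Per F Ω := by
          apply mul_le_mul_right
          apply measure_mono
          refine Set.iUnion₂_subset fun b hb => ?_
          exact (ball_subset_ball (by linarith [hρr0 b (huS hb), hr0R] :
            ρ b ≤ R)).trans (hS b (huS hb)).1
      _ = ENNReal.ofReal (8 ^ d * C / c1) * Per F Ω := by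
          rw [mul_div_assoc]

lemma aux_core {M : Type*} [MetricSpace M] [MeasurableSpace M] [BorelSpace M]
    [TopologicalSpace.SeparableSpace M]
    (μ : Measure M) (hsphere : ∀ (p : M) (r : ℝ), μ (sphere p r) = 0)
    {Q : ℝ} (hQ : 1 < Q) (Per : Set M → Measure M) (Ω : Set M)
    (E : ℕ → Set M) (hEm : ∀ h, MeasurableSet (E h))
    (hE0 : Tendsto (fun h => μ (E h)) atTop (𝓝 0))
    (hP0 : Tendsto (fun h => Per (E h) Ω) atTop (𝓝 0))
    {α : ℝ} (hα : α ∈ Set.Ioo (0:ℝ) 1)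
    {C R : ℝ} (hC : 0 < C) (hR : 0 < R)
    (S : Set M)
    (hS : ∀ p ∈ S, ball p R ⊆ Ω ∧
      (∀ r ∈ Set.Ioo (0:ℝ) R, ENNReal.ofReal (r ^ Q / C) ≤ μ (ball p r) ∧
        μ (ball p r) ≤ ENNReal.ofReal (C * r ^ Q)) ∧
      (∀ h : ℕ, ∀ r ∈ Set.Ioo (0:ℝ) R,
        (min (μ (E h ∩ ball p r)) (μ (ball p r \ E h))) ^ ((Q - 1) / Q)
          ≤ ENNReal.ofReal C * Per (E h) (ball p r)) ∧
      (∀ h : ℕ, ENNReal.ofReal α ≤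
        limsup (fun r : ℝ => μ (E h ∩ ball p r) / μ (ball p r)) (𝓝[>] 0))) :
    μH[Q - 1] S = 0 := by
  obtain ⟨hα0, hα1⟩ := hα
  set m : ℝ := min (α/2) (1 - α/2) with hmdef
  have hm : 0 < m := lt_min (by linarith) (by linarith)
  have hQ0 : (0:ℝ) < Q := by linarith
  set K : ℝ := 8 ^ (Q-1) * C / (m / C) ^ ((Q-1)/Q) with hKdef
  have hK : 0 < K := by
    apply div_pos
    · exact mul_pos (Real.rpow_pos_of_pos (by norm_num) _) hC
    · exact Real.rpow_pos_of_pos (div_pos hm hC) _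
  have key : ∀ n : ℕ, ∃ (u : Set M) (t : M → Set M), u.Countable ∧ (S ⊆ ⋃ b ∈ u, t b) ∧
      (∀ b ∈ u, EMetric.diam (t b) ≤ ENNReal.ofReal (1/(n+1))) ∧
      ∑' b : u, EMetric.diam (t b) ^ (Q - 1) ≤ ENNReal.ofReal (1/(n+1)) := by
    intro n
    set δ : ℝ := 1/(n+1) with hδdef
    have hδ : 0 < δ := by positivity
    set r0 : ℝ := min (δ/8) (R/2) with hr0def
    have hr0 : 0 < r0 := lt_min (by linarith) (by linarith)
    have hpos1 : (0:ℝ) < (α/2) * (r0 ^ Q / C) := by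
      have : (0:ℝ) < r0 ^ Q := Real.rpow_pos_of_pos hr0 _
      positivity
    have hev1 : ∀ᶠ h in atTop, μ (E h) < ENNReal.ofReal ((α/2) * (r0 ^ Q / C)) :=
      hE0.eventually_lt_const (ENNReal.ofReal_pos.2 hpos1)
    have hev2 : ∀ᶠ h in atTop, Per (E h) Ω < ENNReal.ofReal (δ / K) :=
      hP0.eventually_lt_const (ENNReal.ofReal_pos.2 (by positivity))
    obtain ⟨h, h1, h2⟩ := (hev1.and hev2).exists
    obtain ⟨u, t, hcnt, hcov, hdiam, hsum⟩ :=
      aux_cover μ hsphere hQ Per Ω ⟨hα0, hα1⟩ hC hR S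
        (fun p hp => ⟨(hS p hp).1, (hS p hp).2.1⟩) (hEm h)
        (fun p hp => (hS p hp).2.2.1 h) (fun p hp => (hS p hp).2.2.2 h) hδ h1
    refine ⟨u, t, hcnt, hcov, hdiam, le_trans hsum ?_⟩
    calc ENNReal.ofReal (8 ^ (Q-1) * C / (m / C) ^ ((Q-1)/Q)) * Per (E h) Ω
        = ENNReal.ofReal K * Per (E h) Ω := by rw [hKdef]
      _ ≤ ENNReal.ofReal K * ENNReal.ofReal (δ / K) := mul_le_mul_right h2.le _
      _ = ENNReal.ofReal (K * (δ / K)) := by rw [ENNReal.ofReal_mul hK.le]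
      _ = ENNReal.ofReal δ := by rw [mul_div_cancel₀ _ hK.ne']
  choose u t hcnt hcov hdiam hsum using key
  haveI : ∀ n, Countable ↥(u n) := fun n => (hcnt n).to_subtype
  refine le_antisymm ?_ zero_le
  have hr : Tendsto (fun n : ℕ => ENNReal.ofReal (1/(n+1))) atTop (𝓝 0) := by
    have := ENNReal.tendsto_ofReal (tendsto_one_div_add_atTop_nhds_zero_nat)
    simpa using this
  have hH := MeasureTheory.Measure.hausdorffMeasure_le_liminf_tsum (Q-1) S
    (l := (atTop : Filter ℕ)) (fun n => ENNReal.ofReal (1/(n+1))) hr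
    (fun n (b : ↥(u n)) => t n b)
    (Eventually.of_forall fun n => fun b => hdiam n b b.2)
    (Eventually.of_forall fun n => by
      intro x hx
      obtain ⟨b, hb, hxb⟩ := Set.mem_iUnion₂.1 (hcov n hx)
      exact Set.mem_iUnion.2 ⟨⟨b, hb⟩, hxb⟩)
  refine le_trans hH ?_
  have hlim : liminf (fun n => ∑' (b : ↥(u n)), EMetric.diam (t n ↑b) ^ (Q-1)) atTop ≤
      liminf (fun n : ℕ => ENNReal.ofReal (1/(n+1))) atTop :=
    liminf_le_liminf (Eventually.of_forall fun n => hsum n)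
  rw [hr.liminf_eq] at hlim
  exact hlim

/-- **Sets with vanishing volume and perimeter have ℋ^{Q−1}-negligible common
high-density points.**
In an (equiregular CC) metric measure space (M,d,μ) of homogeneous dimension Q,
with local Ahlfors Q-regularity, the relative isoperimetric inequality
min{μ(E∩B(p,r)), μ(B(p,r)\E)}^{(Q−1)/Q} ≤ C·P(E, B(p,r)) (where P(E,·) is the
perimeter measure of E), and spheres of μ-measure zero (valid since the space is
geodesic): if (E_h) are measurable subsets of the open set Ω with μ(E_h) → 0 and
P(E_h; Ω) → 0, then for every α ∈ (0,1) the set of points where all the E_h have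
upper density ≥ α is ℋ^{Q−1}-null. -/
theorem stmt_13 {M : Type*} [MetricSpace M] [MeasurableSpace M] [BorelSpace M]
    [TopologicalSpace.SeparableSpace M]
    (μ : Measure M) [IsLocallyFiniteMeasure μ]
    (Q : ℝ) (hQ : 1 < Q)
    -- the perimeter measure E ↦ P(E,·)
    (Per : Set M → Measure M)
    (Ω : Set M) (hΩ : IsOpen Ω)
    (hreg : ∀ K : Set M, IsCompact K → ∃ C > (0:ℝ), ∃ R > (0:ℝ), ∀ p ∈ K,
      ∀ r ∈ Set.Ioo (0:ℝ) R,
        ENNReal.ofReal (r ^ Q / C) ≤ μ (ball p r) ∧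
        μ (ball p r) ≤ ENNReal.ofReal (C * r ^ Q))
    (hiso : ∀ K : Set M, IsCompact K → ∃ C > (0:ℝ), ∃ R > (0:ℝ),
      ∀ (E : Set M), MeasurableSet E → ∀ p ∈ K, ∀ r ∈ Set.Ioo (0:ℝ) R,
        (min (μ (E ∩ ball p r)) (μ (ball p r \ E))) ^ ((Q - 1) / Q)
          ≤ ENNReal.ofReal C * Per E (ball p r))
    (hsphere : ∀ (p : M) (r : ℝ), μ (sphere p r) = 0)
    (E : ℕ → Set M) (hEm : ∀ h, MeasurableSet (E h)) (hEΩ : ∀ h, E h ⊆ Ω)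
    (hE0 : Tendsto (fun h => μ (E h)) atTop (𝓝 0))
    (hP0 : Tendsto (fun h => Per (E h) Ω) atTop (𝓝 0))
    (α : ℝ) (hα : α ∈ Set.Ioo (0:ℝ) 1) :
    μH[Q - 1] (⋂ h : ℕ, {p : M | p ∈ Ω ∧
      ENNReal.ofReal α ≤
        Filter.limsup (fun r : ℝ => μ (E h ∩ ball p r) / μ (ball p r)) (𝓝[>] 0)})
      = 0 := by
  set D : Set M := ⋂ h : ℕ, {p : M | p ∈ Ω ∧
    ENNReal.ofReal α ≤
      Filter.limsup (fun r : ℝ => μ (E h ∩ ball p r) / μ (ball p r)) (𝓝[>] 0)} with hD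
  set G : ℕ → Set M := fun k => {p ∈ D |
    ball p (1/((k:ℝ)+1)) ⊆ Ω ∧
    (∀ r ∈ Set.Ioo (0:ℝ) (1/((k:ℝ)+1)),
      ENNReal.ofReal (r ^ Q / ((k:ℝ)+1)) ≤ μ (ball p r) ∧
      μ (ball p r) ≤ ENNReal.ofReal (((k:ℝ)+1) * r ^ Q)) ∧
    (∀ h : ℕ, ∀ r ∈ Set.Ioo (0:ℝ) (1/((k:ℝ)+1)),
      (min (μ (E h ∩ ball p r)) (μ (ball p r \ E h))) ^ ((Q - 1) / Q)
        ≤ ENNReal.ofReal ((k:ℝ)+1) * Per (E h) (ball p r))} with hG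
  have hcov : D ⊆ ⋃ k : ℕ, G k := by
    intro p hp
    have hpΩ : p ∈ Ω := (Set.mem_iInter.1 hp 0).1
    obtain ⟨C1, hC1, R1, hR1, h1⟩ := hreg {p} isCompact_singleton
    obtain ⟨C2, hC2, R2, hR2, h2⟩ := hiso {p} isCompact_singleton
    obtain ⟨ε, hε, hball⟩ := Metric.isOpen_iff.1 hΩ p hpΩ
    obtain ⟨k, hk⟩ := exists_nat_gt (max (max C1 C2) (max (max (1/R1) (1/R2)) (1/ε)))
    have hk1 : C1 ≤ (k:ℝ)+1 := by
      have := le_max_left C1 C2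
      have := le_max_left (max C1 C2) (max (max (1/R1) (1/R2)) (1/ε))
      linarith
    have hk2 : C2 ≤ (k:ℝ)+1 := by
      have := le_max_right C1 C2
      have := le_max_left (max C1 C2) (max (max (1/R1) (1/R2)) (1/ε))
      linarith
    have hkpos : (0:ℝ) < (k:ℝ)+1 := by positivity
    have hinv : ∀ (a : ℝ), 0 < a → 1/a < (k:ℝ)+1 → 1/((k:ℝ)+1) < a := by
      intro a ha hlt
      have h3 := one_div_lt_one_div_of_lt (by positivity : (0:ℝ) < 1/a) hlt
      rwa [one_div_one_div] at h3
    have hR1' : 1/((k:ℝ)+1) < R1 := by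
      apply hinv _ hR1
      have := le_max_left (1/R1) (1/R2)
      have := le_max_left (max (1/R1) (1/R2)) (1/ε)
      have := le_max_right (max C1 C2) (max (max (1/R1) (1/R2)) (1/ε))
      linarith
    have hR2' : 1/((k:ℝ)+1) < R2 := by
      apply hinv _ hR2
      have := le_max_right (1/R1) (1/R2)
      have := le_max_left (max (1/R1) (1/R2)) (1/ε)
      have := le_max_right (max C1 C2) (max (max (1/R1) (1/R2)) (1/ε))
      linarith
    have hε' : 1/((k:ℝ)+1) < ε := by
      apply hinv _ hε
      have := le_max_right (max (1/R1) (1/R2)) (1/ε)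
      have := le_max_right (max C1 C2) (max (max (1/R1) (1/R2)) (1/ε))
      linarith
    refine Set.mem_iUnion.2 ⟨k, hp, ?_, ?_, ?_⟩
    · exact (ball_subset_ball hε'.le).trans hball
    · intro r hr
      have hrR1 : r ∈ Set.Ioo (0:ℝ) R1 := ⟨hr.1, hr.2.trans hR1'⟩
      have hrQ : (0:ℝ) ≤ r ^ Q := (Real.rpow_pos_of_pos hr.1 _).le
      constructor
      · refine le_trans (ENNReal.ofReal_le_ofReal ?_) (h1 p rfl r hrR1).1
        exact div_le_div_of_nonneg_left hrQ hC1 hk1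
      · refine le_trans (h1 p rfl r hrR1).2 (ENNReal.ofReal_le_ofReal ?_)
        exact mul_le_mul_of_nonneg_right hk1 hrQ
    · intro h r hr
      have hrR2 : r ∈ Set.Ioo (0:ℝ) R2 := ⟨hr.1, hr.2.trans hR2'⟩
      refine le_trans (h2 (E h) (hEm h) p rfl r hrR2) ?_
      exact mul_le_mul_left (ENNReal.ofReal_le_ofReal hk2) _
  refine le_antisymm (le_trans (measure_mono hcov)
    (le_of_eq (measure_iUnion_null fun k => ?_))) zero_le
  refine aux_core μ hsphere hQ Per Ω E hEm hE0 hP0 hα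
    (by positivity : (0:ℝ) < (k:ℝ)+1) (by positivity : (0:ℝ) < 1/((k:ℝ)+1)) (G k) ?_
  intro p hp
  obtain ⟨hpD, hball, hAhl, hiso'⟩ := hp
  exact ⟨hball, hAhl, hiso', fun h => (Set.mem_iInter.1 hpD h).2⟩
end
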